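/- arXiv:1402.5136 — 2 statements merged into one kernel-verified Lean document; each statement's English description precedes it below -/
import Mathlib

section
/- Let S be a monoid satisfying the identities σ1: x y t1 x t2 y ≈ y x t1 x t2 y and σ2: x t1 y t2 x y ≈ x t1 y t2 y x. Then for every identity of S having property P_1 there exists an identity τ of S having property P_{1b} such that the given identity is a consequence of the set consisting of all almost-linear identities of S, the set {σ1, σ2}^δ, and {τ}. -/
/-- Words over a countably infinite alphabet of variables (identified with ℕ). -/
abbrev Wd := List ℕ

/-- Evaluation of a word in a monoid under an assignment of the variables. -/
def evalWord {M : Type*} [Monoid M] (φ : ℕ → M) (u : Wd) : M := (u.map φ).prod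

/-- A monoid `M` satisfies the identity `e = (u, v)`. -/
def Sat (M : Type*) [Monoid M] (e : Wd × Wd) : Prop :=
  ∀ φ : ℕ → M, evalWord φ e.1 = evalWord φ e.2

/-- The identity `e` is a consequence of the set of identities `Γ`:
every monoid satisfying all identities of `Γ` satisfies `e`. -/
def Consequence (Γ : Set (Wd × Wd)) (e : Wd × Wd) : Prop :=
  ∀ (M : Type) [Monoid M], (∀ f ∈ Γ, Sat M f) → Sat M e

/-- The content of a word: the set of variables occurring in it. -/
def conW (u : Wd) : Set ℕ := {x | x ∈ u}

/-- The set of linear (exactly once occurring) variables of a word. -/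
def linW (u : Wd) : Set ℕ := {x | u.count x = 1}

/-- The set of non-linear (more than once occurring) variables of a word. -/
def nonW (u : Wd) : Set ℕ := {x | 2 ≤ u.count x}

/-- `restrict u X` is the word obtained from `u` by deleting all occurrences of
all variables not in `X`. -/
noncomputable def restrict (u : Wd) (X : Set ℕ) : Wd :=
  u.filter (fun a => @decide (a ∈ X) (Classical.propDecidable _))

/-- The closure of a set of identities under deleting variables. -/
def delta (Γ : Set (Wd × Wd)) : Set (Wd × Wd) :=
  {e | ∃ f ∈ Γ, ∃ X : Set ℕ, e = (restrict f.1 X, restrict f.2 X)}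

/-- A word is almost-linear if it has at most one non-linear variable. -/
def AlmostLinearW (u : Wd) : Prop := ∀ x y, 2 ≤ u.count x → 2 ≤ u.count y → x = y

/-- An identity is almost-linear if both of its sides are almost-linear words. -/
def AlmostLinearId (e : Wd × Wd) : Prop := AlmostLinearW e.1 ∧ AlmostLinearW e.2

/-- An identity is regular if both sides have the same content. -/
def RegularId (e : Wd × Wd) : Prop := conW e.1 = conW e.2

/-- A word `u` is an isoterm for a monoid `M` if the only word `v` with
`M ⊨ u ≈ v` is `u` itself. -/
def Isoterm (M : Type*) [Monoid M] (u : Wd) : Prop := ∀ v : Wd, Sat M (u, v) → v = u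

/-- An identity `u ≈ v` is block-balanced if `u(x, lin u) = v(x, lin u)`
for every variable `x`. -/
def BlockBalanced (e : Wd × Wd) : Prop :=
  ∀ x : ℕ, restrict e.1 ({x} ∪ linW e.1) = restrict e.2 ({x} ∪ linW e.1)

/-- A monoid is finitely based: some finite set of its identities implies all of them. -/
def FinitelyBased (S : Type*) [Monoid S] : Prop :=
  ∃ Γ : Set (Wd × Wd), Γ.Finite ∧ (∀ e ∈ Γ, Sat S e) ∧
    ∀ e : Wd × Wd, Sat S e → Consequence Γ e

/-- Index of the first occurrence of a variable in a word. -/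
def firstIdx (u : Wd) (x : ℕ) : ℕ := u.idxOf x

/-- Index of the last occurrence of a variable in a word. -/
def lastIdx (u : Wd) (x : ℕ) : ℕ := u.length - 1 - u.reverse.idxOf x

/-- σ1 : x y t1 x t2 y ≈ y x t1 x t2 y, with x=0, y=1, t1=2, t2=3. -/
def sigma1 : Wd × Wd := ([0,1,2,0,3,1], [1,0,2,0,3,1])

/-- σμ : x t1 x y t2 y ≈ x t1 y x t2 y, with x=0, y=1, t1=2, t2=3. -/
def sigmaMu : Wd × Wd := ([0,2,0,1,3,1], [0,2,1,0,3,1])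

/-- σ2 : x t1 y t2 x y ≈ x t1 y t2 y x, with x=0, y=1, t1=2, t2=3. -/
def sigma2 : Wd × Wd := ([0,2,1,3,0,1], [0,2,1,3,1,0])

/-- Property P₁: same linear and non-linear variables and the same word of
linear variables. -/
def P1 (e : Wd × Wd) : Prop :=
  linW e.1 = linW e.2 ∧ nonW e.1 = nonW e.2 ∧
  restrict e.1 (linW e.1) = restrict e.2 (linW e.1)

/-- No linear variable of `u` occurs in `u` between two occurrences of `x`. -/
def NoLinBetween (u : Wd) (x : ℕ) : Prop :=
  ∀ i k j : ℕ, i < k → k < j → j < u.length →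
    u.getD i 0 = x → u.getD j 0 = x → u.getD k 0 ∉ linW u

/-- Property P₁ᵦ: property P₁, and for every non-linear variable `x` on which
the two sides disagree (after deleting everything except `x` and the linear
variables), all occurrences of `x` lie in a single block on each side. -/
def P1b (e : Wd × Wd) : Prop :=
  P1 e ∧
  ∀ x ∈ nonW e.1,
    restrict e.1 ({x} ∪ linW e.1) ≠ restrict e.2 ({x} ∪ linW e.1) →
      NoLinBetween e.1 x ∧ NoLinBetween e.2 x

universe uM

section A
variable {M : Type*} [Monoid M] (φ : ℕ → M)

@[simp] lemma evalWord_nil : evalWord φ [] = 1 := rfl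
@[simp] lemma evalWord_cons (a : ℕ) (u : Wd) :
    evalWord φ (a :: u) = φ a * evalWord φ u := by simp [evalWord]
@[simp] lemma evalWord_append (u v : Wd) :
    evalWord φ (u ++ v) = evalWord φ u * evalWord φ v := by simp [evalWord]
@[simp] lemma evalWord_singleton (a : ℕ) : evalWord φ [a] = φ a := by simp [evalWord]

lemma evalWord_flatMap (s : ℕ → Wd) (u : Wd) :
    evalWord φ (u.flatMap s) = evalWord (fun c => evalWord φ (s c)) u := by
  induction u with
  | nil => rfl
  | cons a t ih => simp [List.flatMap_cons, ih]

lemma evalWord_filter (p : ℕ → Bool) (u : Wd) :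
    evalWord φ (u.filter p) = evalWord (fun c => if p c then φ c else 1) u := by
  induction u with
  | nil => rfl
  | cons a t ih =>
    by_cases h : p a <;> simp [List.filter_cons, h, ih]

lemma Sat.symm' {e f : Wd} (h : Sat M (e, f)) : Sat M (f, e) := fun φ => (h φ).symm

/-- closure of Sat under deleting letters (as a Bool filter) -/
lemma Sat.filter {u v : Wd} (h : Sat M (u, v)) (p : ℕ → Bool) :
    Sat M (u.filter p, v.filter p) := by
  intro φ
  simpa [evalWord_filter] using h (fun c => if p c then φ c else 1)

lemma restrict_eq_filter (u : Wd) (X : Set ℕ) (p : ℕ → Bool)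
    (h : ∀ a, p a = true ↔ a ∈ X) : restrict u X = u.filter p := by
  unfold restrict
  apply List.filter_congr
  intro a _
  rcases Classical.em (a ∈ X) with hx | hx
  · simp [hx, (h a).mpr hx]
  · have : p a = false := by
      cases hp : p a
      · rfl
      · exact absurd ((h a).mp hp) hx
    simp [hx, this]

lemma Sat.del {u v : Wd} (h : Sat M (u, v)) (X : Set ℕ) :
    Sat M (restrict u X, restrict v X) := by
  classical
  have := Sat.filter h (fun a => decide (a ∈ X))
  have e1 : restrict u X = u.filter (fun a => decide (a ∈ X)) :=
    restrict_eq_filter _ _ _ (by intro a; simp)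
  have e2 : restrict v X = v.filter (fun a => decide (a ∈ X)) :=
    restrict_eq_filter _ _ _ (by intro a; simp)
  rw [e1, e2]; exact this

end A

section B
variable {M : Type*} [Monoid M]

lemma sigma1_inst (h : Sat M sigma1) (X Y T1 T2 : M) :
    X * Y * T1 * X * T2 * Y = Y * X * T1 * X * T2 * Y := by
  have := h (fun n => if n = 0 then X else if n = 1 then Y else if n = 2 then T1 else T2)
  simpa [sigma1, evalWord, mul_assoc] using this

lemma sigma2_inst (h : Sat M sigma2) (X Y T1 T2 : M) :
    X * T1 * Y * T2 * X * Y = X * T1 * Y * T2 * Y * X := by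
  have := h (fun n => if n = 0 then X else if n = 1 then Y else if n = 2 then T1 else T2)
  simpa [sigma2, evalWord, mul_assoc] using this

lemma two_mem_split {a b : ℕ} : ∀ {D : Wd}, a ∈ D → b ∈ D → a ≠ b →
    ∃ D₁ D₂ D₃ : Wd, D = D₁ ++ a :: D₂ ++ b :: D₃ ∨ D = D₁ ++ b :: D₂ ++ a :: D₃ := by
  intro D
  induction D with
  | nil => intro h; cases h
  | cons c t ih =>
    intro ha hb hne
    by_cases hca : c = a
    · subst hca
      have hbt : b ∈ t := by
        rcases List.mem_cons.mp hb with h | h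
        · exact absurd h.symm hne
        · exact h
      obtain ⟨T₁, T₂, hT⟩ := List.append_of_mem hbt
      exact ⟨[], T₁, T₂, Or.inl (by simp [hT])⟩
    · by_cases hcb : c = b
      · subst hcb
        have hat : a ∈ t := by
          rcases List.mem_cons.mp ha with h | h
          · exact absurd h.symm hca
          · exact h
        obtain ⟨T₁, T₂, hT⟩ := List.append_of_mem hat
        exact ⟨[], T₁, T₂, Or.inr (by simp [hT])⟩
      · have hat : a ∈ t := by
          rcases List.mem_cons.mp ha with h | h
          · exact absurd h.symm hca
          · exact h
        have hbt : b ∈ t := by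
          rcases List.mem_cons.mp hb with h | h
          · exact absurd h.symm hcb
          · exact h
        obtain ⟨D₁, D₂, D₃, hor⟩ := ih hat hbt hne
        exact ⟨c :: D₁, D₂, D₃, by rcases hor with h | h <;> [left; right] <;> simp [h]⟩

lemma swap_core1 (h1 : Sat M sigma1) (A B e1 e2 e3 : M) :
    A * (B * (e1 * (A * (e2 * (B * e3))))) = B * (A * (e1 * (A * (e2 * (B * e3))))) := by
  have h' := congrArg (· * e3) (sigma1_inst h1 A B e1 e2)
  simpa [mul_assoc] using h'

lemma swap_core1' (h1 : Sat M sigma1) (A B e1 e2 e3 : M) :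
    A * (B * (e1 * (B * (e2 * (A * e3))))) = B * (A * (e1 * (B * (e2 * (A * e3))))) := by
  have h' := congrArg (· * e3) (sigma1_inst h1 B A e1 e2)
  simpa [mul_assoc] using h'.symm

lemma swap_core2 (h2 : Sat M sigma2) (A B e2 e3 e4 : M) :
    A * (e2 * (B * (e3 * (A * (B * e4))))) = A * (e2 * (B * (e3 * (B * (A * e4))))) := by
  have h' := congrArg (· * e4) (sigma2_inst h2 A B e2 e3)
  simpa [mul_assoc] using h'

lemma swap_core2' (h2 : Sat M sigma2) (A B e2 e3 e4 : M) :
    B * (e2 * (A * (e3 * (A * (B * e4))))) = B * (e2 * (A * (e3 * (B * (A * e4))))) := by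
  have h' := congrArg (· * e4) (sigma2_inst h2 B A e2 e3)
  simpa [mul_assoc] using h'.symm

/-- swap two adjacent letters when both occur after the pair (σ1). -/
lemma eval_swap_right (h1 : Sat M sigma1) (φ : ℕ → M) {a b : ℕ} (C D : Wd)
    (ha : a ∈ D) (hb : b ∈ D) :
    evalWord φ (C ++ a :: b :: D) = evalWord φ (C ++ b :: a :: D) := by
  by_cases hne : a = b
  · subst hne; rfl
  obtain ⟨D₁, D₂, D₃, hor⟩ := two_mem_split ha hb hne
  rcases hor with hD | hD <;> subst hD <;>
    simp only [evalWord_append, evalWord_cons, mul_assoc]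
  · rw [swap_core1 h1 (φ a) (φ b) (evalWord φ D₁) (evalWord φ D₂) (evalWord φ D₃)]
  · rw [swap_core1' h1 (φ a) (φ b) (evalWord φ D₁) (evalWord φ D₂) (evalWord φ D₃)]

/-- swap two adjacent letters when both occur before the pair (σ2). -/
lemma eval_swap_left (h2 : Sat M sigma2) (φ : ℕ → M) {a b : ℕ} (C D : Wd)
    (ha : a ∈ C) (hb : b ∈ C) :
    evalWord φ (C ++ a :: b :: D) = evalWord φ (C ++ b :: a :: D) := by
  by_cases hne : a = b
  · subst hne; rfl
  obtain ⟨C₁, C₂, C₃, hor⟩ := two_mem_split ha hb hne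
  rcases hor with hC | hC <;> subst hC <;>
    simp only [evalWord_append, evalWord_cons, mul_assoc]
  · rw [swap_core2 h2 (φ a) (φ b) (evalWord φ C₂) (evalWord φ C₃) (evalWord φ D)]
  · rw [swap_core2' h2 (φ a) (φ b) (evalWord φ C₂) (evalWord φ C₃) (evalWord φ D)]

lemma eval_swap {h1 : Sat M sigma1} {h2 : Sat M sigma2} (φ : ℕ → M) {a b : ℕ} {C D : Wd}
    (h : (a ∈ C ∧ b ∈ C) ∨ (a ∈ D ∧ b ∈ D)) :
    evalWord φ (C ++ a :: b :: D) = evalWord φ (C ++ b :: a :: D) := by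
  rcases h with ⟨ha, hb⟩ | ⟨ha, hb⟩
  · exact eval_swap_left h2 φ C D ha hb
  · exact eval_swap_right h1 φ C D ha hb

end B

section C
variable {x : ℕ}

def GapFree (x : ℕ) (B : Wd) : Prop :=
  ∀ A G E : Wd, B = A ++ x :: (G ++ x :: E) → x ∉ G → G = []

def invR (x : ℕ) : Wd → ℕ
  | [] => 0
  | c :: t => invR x t + (if c = x then 0 else t.count x)

def invL (x : ℕ) : Wd → ℕ
  | [] => 0
  | c :: t => invL x t + (if c = x then t.countP (fun d => !(d == x)) else 0)

lemma invR_cons (c : ℕ) (t : Wd) :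
    invR x (c :: t) = invR x t + (if c = x then 0 else t.count x) := rfl

lemma invL_cons (c : ℕ) (t : Wd) :
    invL x (c :: t) = invL x t + (if c = x then t.countP (fun d => !(d == x)) else 0) := rfl

lemma not_gapFree {B : Wd} (h : ¬ GapFree x B) :
    ∃ A G E : Wd, B = A ++ x :: (G ++ x :: E) ∧ x ∉ G ∧ G ≠ [] := by
  unfold GapFree at h
  push_neg at h
  obtain ⟨A, G, E, h1, h2, h3⟩ := h
  exact ⟨A, G, E, h1, h2, h3⟩

lemma gapWitnessR {B : Wd} (h : ¬ GapFree x B) :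
    ∃ P c S, B = P ++ c :: x :: S ∧ c ≠ x ∧ x ∈ P := by
  obtain ⟨A, G, E, hB, hxG, hG⟩ := not_gapFree h
  obtain ⟨G₀, g, hG0⟩ := (List.eq_nil_or_concat G).resolve_left hG
  refine ⟨A ++ x :: G₀, g, E, ?_, ?_, by simp⟩
  · subst hG0; simp [hB]
  · intro hgx; exact hxG (by simp [hG0, hgx])

lemma gapWitnessL {B : Wd} (h : ¬ GapFree x B) :
    ∃ P c S, B = P ++ x :: c :: S ∧ c ≠ x ∧ x ∈ S := by
  obtain ⟨A, G, E, hB, hxG, hG⟩ := not_gapFree h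
  obtain ⟨g, G₁, hG0⟩ := List.exists_cons_of_ne_nil hG
  refine ⟨A, g, G₁ ++ x :: E, ?_, ?_, by simp⟩
  · subst hG0; simp [hB]
  · intro hgx; exact hxG (by simp [hG0, hgx])

lemma invR_swap (c : ℕ) (hc : c ≠ x) : ∀ P S : Wd,
    invR x (P ++ x :: c :: S) + 1 = invR x (P ++ c :: x :: S) := by
  intro P S
  induction P with
  | nil => simp [invR, hc, List.count_cons]; omega
  | cons d P ih =>
    have hcnt : (P ++ x :: c :: S).count x = (P ++ c :: x :: S).count x := by
      simp [List.count_append, List.count_cons]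
      omega
    rw [List.cons_append, List.cons_append, invR_cons, invR_cons]
    by_cases hdx : d = x
    · rw [if_pos hdx, if_pos hdx]
      omega
    · rw [if_neg hdx, if_neg hdx, hcnt]
      omega

lemma invL_swap (c : ℕ) (hc : c ≠ x) : ∀ P S : Wd,
    invL x (P ++ c :: x :: S) + 1 = invL x (P ++ x :: c :: S) := by
  intro P S
  induction P with
  | nil =>
    simp [invL, hc, List.countP_cons]
    omega
  | cons d P ih =>
    have hcnt : (P ++ c :: x :: S).countP (fun d => !(d == x))
        = (P ++ x :: c :: S).countP (fun d => !(d == x)) := by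
      simp [List.countP_append, List.countP_cons]
    rw [List.cons_append, List.cons_append, invL_cons, invL_cons]
    by_cases hdx : d = x
    · rw [if_pos hdx, if_pos hdx, hcnt]
      omega
    · rw [if_neg hdx, if_neg hdx]
      omega

lemma gapFree_tail {d : ℕ} {t : Wd} (h : GapFree x (d :: t)) : GapFree x t := by
  intro A G E hT hxG
  exact h (d :: A) G E (by simp [hT]) hxG

lemma runSplit : ∀ {B : Wd}, GapFree x B →
    ∃ (A : Wd) (k : ℕ) (C : Wd),
      B = A ++ List.replicate k x ++ C ∧ x ∉ A ∧ x ∉ C := by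
  intro B
  induction B with
  | nil => intro _; exact ⟨[], 0, [], by simp, by simp, by simp⟩
  | cons c t ih =>
    intro h
    by_cases hcx : x = c
    · subst hcx
      obtain ⟨A, k, C, ht, hA, hC⟩ := ih (gapFree_tail h)
      rcases A with _ | ⟨a, A'⟩
      · exact ⟨[], k + 1, C, by simp [ht, List.replicate_succ], by simp, hC⟩
      · rcases k with _ | k'
        · refine ⟨[], 1, (a :: A') ++ C, by simp [ht, List.replicate_succ], by simp, ?_⟩
          intro hm
          rcases List.mem_append.mp hm with hm | hm
          · exact hA hm
          · exact hC hm
        · exfalso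
          have hnil : (a :: A') = [] := by
            apply h [] (a :: A') (List.replicate k' x ++ C)
            · simp [ht, List.replicate_succ]
            · exact hA
          simp at hnil
    · obtain ⟨A, k, C, ht, hA, hC⟩ := ih (gapFree_tail h)
      refine ⟨c :: A, k, C, by simp [ht], ?_, hC⟩
      intro hm
      rcases List.mem_cons.mp hm with hm | hm
      · exact hcx hm
      · exact hA hm

end C

section D
variable {x : ℕ}

lemma count_split {c : ℕ} (C P S D : Wd) (hcx : c ≠ x)
    (h2 : 2 ≤ (C ++ (P ++ c :: x :: S) ++ D).count c) :
    c ∈ C ++ P ∨ c ∈ S ++ D := by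
  have hc : (C ++ P).count c + (S ++ D).count c + 1
      = (C ++ (P ++ c :: x :: S) ++ D).count c := by
    simp [List.count_append, List.count_cons, hcx, Ne.symm hcx]
    omega
  have h1 : 1 ≤ (C ++ P).count c + (S ++ D).count c := by omega
  rcases Nat.lt_or_ge 0 ((C ++ P).count c) with h | h
  · exact Or.inl (List.count_pos_iff.mp h)
  · exact Or.inr (List.count_pos_iff.mp (by omega))

lemma count_split' {c : ℕ} (C P S D : Wd) (hcx : c ≠ x)
    (h2 : 2 ≤ (C ++ (P ++ x :: c :: S) ++ D).count c) :
    c ∈ C ++ P ∨ c ∈ S ++ D := by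
  have hc : (C ++ P).count c + (S ++ D).count c + 1
      = (C ++ (P ++ x :: c :: S) ++ D).count c := by
    simp [List.count_append, List.count_cons, hcx, Ne.symm hcx]
    omega
  have h1 : 1 ≤ (C ++ P).count c + (S ++ D).count c := by omega
  rcases Nat.lt_or_ge 0 ((C ++ P).count c) with h | h
  · exact Or.inl (List.count_pos_iff.mp h)
  · exact Or.inr (List.count_pos_iff.mp (by omega))

lemma gatherR : ∀ (n : ℕ) (B C D : Wd), invR x B ≤ n → x ∈ D →
    (∀ c ∈ B, c ≠ x → 2 ≤ (C ++ B ++ D).count c) →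
    ∃ B' : Wd, B.Perm B' ∧ GapFree x B' ∧
      ∀ (M : Type uM) [Monoid M] (φ : ℕ → M), Sat M sigma1 → Sat M sigma2 →
        evalWord φ (C ++ B ++ D) = evalWord φ (C ++ B' ++ D) := by
  intro n
  induction n with
  | zero =>
    intro B C D hn hxD hcard
    by_cases hGF : GapFree x B
    · exact ⟨B, List.Perm.refl B, hGF, fun M _ φ _ _ => rfl⟩
    · exfalso
      obtain ⟨P, c, S, hB, hcx, hxP⟩ := gapWitnessR hGF
      have := invR_swap c hcx P S
      rw [hB] at hn
      omega
  | succ n ih =>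
    intro B C D hn hxD hcard
    by_cases hGF : GapFree x B
    · exact ⟨B, List.Perm.refl B, hGF, fun M _ φ _ _ => rfl⟩
    · obtain ⟨P, c, S, hB, hcx, hxP⟩ := gapWitnessR hGF
      have hperm : B.Perm (P ++ x :: c :: S) := by
        rw [hB]
        exact List.Perm.append_left P (List.Perm.swap x c S)
      have hfull : (C ++ B ++ D).Perm (C ++ (P ++ x :: c :: S) ++ D) :=
        ((hperm.append_left C).append_right D)
      have hn2 : invR x (P ++ x :: c :: S) ≤ n := by
        have := invR_swap c hcx P S
        rw [hB] at hn
        omega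
      have hcard2 : ∀ c' ∈ (P ++ x :: c :: S), c' ≠ x →
          2 ≤ (C ++ (P ++ x :: c :: S) ++ D).count c' := by
        intro c' hc' hcx'
        rw [← hfull.count_eq]
        exact hcard c' (hperm.mem_iff.mpr hc') hcx'
      obtain ⟨B', hp', hGF', hev'⟩ := ih (P ++ x :: c :: S) C D hn2 hxD hcard2
      refine ⟨B', hperm.trans hp', hGF', ?_⟩
      intro M _ φ h1 h2
      have hc2 : 2 ≤ (C ++ (P ++ c :: x :: S) ++ D).count c := by
        rw [← hB]
        exact hcard c (by rw [hB]; simp) hcx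
      have hcond : (c ∈ C ++ P ∧ x ∈ C ++ P) ∨ (c ∈ S ++ D ∧ x ∈ S ++ D) := by
        rcases count_split C P S D hcx hc2 with h | h
        · exact Or.inl ⟨h, by simp [hxP]⟩
        · exact Or.inr ⟨h, by simp [hxD]⟩
      have e1 : C ++ B ++ D = (C ++ P) ++ c :: x :: (S ++ D) := by
        simp [hB]
      have e2 : C ++ (P ++ x :: c :: S) ++ D = (C ++ P) ++ x :: c :: (S ++ D) := by
        simp
      have hswap := eval_swap (h1 := h1) (h2 := h2) φ hcond
      rw [e1, hswap, ← e2]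
      exact hev' M φ h1 h2

lemma gatherL : ∀ (n : ℕ) (B C D : Wd), invL x B ≤ n → x ∈ C →
    (∀ c ∈ B, c ≠ x → 2 ≤ (C ++ B ++ D).count c) →
    ∃ B' : Wd, B.Perm B' ∧ GapFree x B' ∧
      ∀ (M : Type uM) [Monoid M] (φ : ℕ → M), Sat M sigma1 → Sat M sigma2 →
        evalWord φ (C ++ B ++ D) = evalWord φ (C ++ B' ++ D) := by
  intro n
  induction n with
  | zero =>
    intro B C D hn hxC hcard
    by_cases hGF : GapFree x B
    · exact ⟨B, List.Perm.refl B, hGF, fun M _ φ _ _ => rfl⟩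
    · exfalso
      obtain ⟨P, c, S, hB, hcx, hxS⟩ := gapWitnessL hGF
      have := invL_swap c hcx P S
      rw [hB] at hn
      omega
  | succ n ih =>
    intro B C D hn hxC hcard
    by_cases hGF : GapFree x B
    · exact ⟨B, List.Perm.refl B, hGF, fun M _ φ _ _ => rfl⟩
    · obtain ⟨P, c, S, hB, hcx, hxS⟩ := gapWitnessL hGF
      have hperm : B.Perm (P ++ c :: x :: S) := by
        rw [hB]
        exact List.Perm.append_left P (List.Perm.swap c x S)
      have hfull : (C ++ B ++ D).Perm (C ++ (P ++ c :: x :: S) ++ D) :=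
        ((hperm.append_left C).append_right D)
      have hn2 : invL x (P ++ c :: x :: S) ≤ n := by
        have := invL_swap c hcx P S
        rw [hB] at hn
        omega
      have hcard2 : ∀ c' ∈ (P ++ c :: x :: S), c' ≠ x →
          2 ≤ (C ++ (P ++ c :: x :: S) ++ D).count c' := by
        intro c' hc' hcx'
        rw [← hfull.count_eq]
        exact hcard c' (hperm.mem_iff.mpr hc') hcx'
      obtain ⟨B', hp', hGF', hev'⟩ := ih (P ++ c :: x :: S) C D hn2 hxC hcard2
      refine ⟨B', hperm.trans hp', hGF', ?_⟩
      intro M _ φ h1 h2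
      have hc2 : 2 ≤ (C ++ (P ++ x :: c :: S) ++ D).count c := by
        rw [← hB]
        exact hcard c (by rw [hB]; simp) hcx
      have hcond : (x ∈ C ++ P ∧ c ∈ C ++ P) ∨ (x ∈ S ++ D ∧ c ∈ S ++ D) := by
        rcases count_split' C P S D hcx hc2 with h | h
        · exact Or.inl ⟨by simp [hxC], h⟩
        · exact Or.inr ⟨by simp [hxS], h⟩
      have e1 : C ++ B ++ D = (C ++ P) ++ x :: c :: (S ++ D) := by
        simp [hB]
      have e2 : C ++ (P ++ c :: x :: S) ++ D = (C ++ P) ++ c :: x :: (S ++ D) := by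
        simp
      have hswap := eval_swap (h1 := h1) (h2 := h2) φ hcond
      rw [e1, hswap, ← e2]
      exact hev' M φ h1 h2

end D

section E
variable {x : ℕ} {pl : ℕ → Bool}

/-- flatten block structure -/
def flatT (ts : List (ℕ × Wd)) : Wd := ts.flatMap (fun p => p.1 :: p.2)
def flatB (B₀ : Wd) (ts : List (ℕ × Wd)) : Wd := B₀ ++ flatT ts

def BlocksOK (pl : ℕ → Bool) (B₀ : Wd) (ts : List (ℕ × Wd)) : Prop :=
  (∀ c ∈ B₀, pl c = false) ∧ ∀ p ∈ ts, pl p.1 = true ∧ ∀ c ∈ p.2, pl c = false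

lemma exists_parse (pl : ℕ → Bool) : ∀ w : Wd, ∃ B₀ ts, w = flatB B₀ ts ∧ BlocksOK pl B₀ ts := by
  intro w
  induction w with
  | nil => exact ⟨[], [], rfl, by simp [BlocksOK], by simp⟩
  | cons c t ih =>
    obtain ⟨B₀, ts, ht, hOK⟩ := ih
    by_cases hc : pl c = true
    · refine ⟨[], (c, B₀) :: ts, ?_, ?_⟩
      · simp [flatB, flatT, ht]
      · exact ⟨by simp, by
          intro p hp
          rcases List.mem_cons.mp hp with h | h
          · subst h; exact ⟨hc, hOK.1⟩
          · exact hOK.2 p h⟩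
    · refine ⟨c :: B₀, ts, by simp [flatB, ht], ?_, hOK.2⟩
      intro d hd
      rcases List.mem_cons.mp hd with h | h
      · subst h; simpa using hc
      · exact hOK.1 d h

lemma flatT_cons (p : ℕ × Wd) (r : List (ℕ × Wd)) :
    flatT (p :: r) = (p.1 :: p.2) ++ flatT r := rfl

lemma filter_flatT (q : ℕ → Bool) (ts : List (ℕ × Wd)) :
    (flatT ts).filter q = ts.flatMap (fun p => (p.1 :: p.2).filter q) := by
  induction ts with
  | nil => rfl
  | cons p r ih => rw [flatT_cons, List.filter_append, ih, List.flatMap_cons]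

lemma filter_blockx (x : ℕ) : ∀ (B : Wd), (hB : ∀ c ∈ B, pl c = false) →
    B.filter (fun c => (c == x) || pl c) = List.replicate (B.count x) x := by
  intro B
  induction B with
  | nil => intro _; rfl
  | cons c t ih =>
    intro hB
    have ht := ih (fun d hd => hB d (List.mem_cons_of_mem _ hd))
    by_cases hcx : c = x
    · subst hcx
      simp [List.filter_cons, List.count_cons, ht, List.replicate_succ]
    · have : pl c = false := hB c (List.mem_cons_self)
      simp [List.filter_cons, List.count_cons, hcx, this, ht, Ne.symm hcx]

lemma filter_blocklin : ∀ (B : Wd), (hB : ∀ c ∈ B, pl c = false) → B.filter pl = [] := by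
  intro B hB
  simp [List.filter_eq_nil_iff]
  intro c hc
  simp [hB c hc]

/-- pattern of x and keys -/
def pattT (x : ℕ) (ts : List (ℕ × Wd)) : Wd :=
  ts.flatMap (fun p => p.1 :: List.replicate (p.2.count x) x)

lemma filter_flatT_px (ts : List (ℕ × Wd))
    (h : ∀ p ∈ ts, pl p.1 = true ∧ ∀ c ∈ p.2, pl c = false) :
    (flatT ts).filter (fun c => (c == x) || pl c) = pattT x ts := by
  induction ts with
  | nil => rfl
  | cons p r ih =>
    have hp := h p (List.mem_cons_self)
    rw [flatT_cons, List.filter_append, List.filter_cons]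
    have hkey : ((p.1 == x) || pl p.1) = true := by simp [hp.1]
    rw [if_pos hkey, filter_blockx x p.2 hp.2,
      ih (fun q hq => h q (List.mem_cons_of_mem _ hq))]
    rfl

lemma filter_flatT_pl (ts : List (ℕ × Wd))
    (h : ∀ p ∈ ts, pl p.1 = true ∧ ∀ c ∈ p.2, pl c = false) :
    (flatT ts).filter pl = ts.map Prod.fst := by
  induction ts with
  | nil => rfl
  | cons p r ih =>
    have hp := h p (List.mem_cons_self)
    rw [flatT_cons, List.filter_append, List.filter_cons, if_pos hp.1,
      filter_blocklin p.2 hp.2, ih (fun q hq => h q (List.mem_cons_of_mem _ hq))]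
    rfl

lemma filter_flatB_px (B₀ : Wd) (ts : List (ℕ × Wd)) (hOK : BlocksOK pl B₀ ts) :
    (flatB B₀ ts).filter (fun c => (c == x) || pl c)
      = List.replicate (B₀.count x) x ++ pattT x ts := by
  unfold flatB
  rw [List.filter_append, filter_blockx x B₀ hOK.1, filter_flatT_px ts hOK.2]

lemma filter_flatB_pl (B₀ : Wd) (ts : List (ℕ × Wd)) (hOK : BlocksOK pl B₀ ts) :
    (flatB B₀ ts).filter pl = ts.map Prod.fst := by
  unfold flatB
  rw [List.filter_append, filter_blocklin B₀ hOK.1, filter_flatT_pl ts hOK.2]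
  rfl

end E

section F
variable {x : ℕ}

/-- block data: (key, A, k, C) representing block A ++ x^k ++ C after key -/
def blkW (x : ℕ) (e : ℕ × Wd × ℕ × Wd) : Wd :=
  e.2.1 ++ List.replicate e.2.2.1 x ++ e.2.2.2

def blocksW (x : ℕ) (es : List (ℕ × Wd × ℕ × Wd)) : Wd :=
  es.flatMap (fun e => e.1 :: blkW x e)

def pattD (x : ℕ) (es : List (ℕ × Wd × ℕ × Wd)) : Wd :=
  es.flatMap (fun e => e.1 :: List.replicate e.2.2.1 x)

def SChain (s : ℕ → Wd) : Wd → List (ℕ × Wd × ℕ × Wd) → Prop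
  | _, [] => True
  | Cp, e :: r => s e.1 = Cp ++ e.1 :: e.2.1 ∧ SChain s e.2.2.2 r

def lastC : Wd → List (ℕ × Wd × ℕ × Wd) → Wd
  | Cp, [] => Cp
  | _, e :: r => lastC e.2.2.2 r

lemma flatMap_replicate {s : ℕ → Wd} (hx : s x = [x]) (k : ℕ) :
    (List.replicate k x).flatMap s = List.replicate k x := by
  induction k with
  | zero => rfl
  | succ k ih => simp [List.replicate_succ, ih, hx]

lemma blocksW_eq {s : ℕ → Wd} (hx : s x = [x]) :
    ∀ (es : List (ℕ × Wd × ℕ × Wd)) (Cp : Wd), SChain s Cp es →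
      Cp ++ blocksW x es = (pattD x es).flatMap s ++ lastC Cp es := by
  intro es
  induction es with
  | nil => intro Cp _; simp [blocksW, pattD, lastC]
  | cons e r ih =>
    intro Cp hch
    obtain ⟨hs, hch'⟩ := hch
    have hr := ih e.2.2.2 hch'
    show Cp ++ (e.1 :: blkW x e ++ blocksW x r)
        = ((e.1 :: List.replicate e.2.2.1 x) ++ pattD x r).flatMap s ++ lastC e.2.2.2 r
    rw [List.flatMap_append, List.flatMap_cons, flatMap_replicate hx, hs]
    unfold blkW
    simp only [List.cons_append, List.append_assoc]
    rw [← hr]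

/-- association list of pieces -/
def buildAl : Wd → List (ℕ × Wd × ℕ × Wd) → List (ℕ × Wd)
  | _, [] => []
  | Cp, e :: r => (e.1, Cp ++ e.1 :: e.2.1) :: buildAl e.2.2.2 r

noncomputable def mkS (x : ℕ) (al : List (ℕ × Wd)) : ℕ → Wd :=
  fun c => if c = x then [x] else ((al.lookup c).getD [c])

lemma lookup_none {c : ℕ} : ∀ (al : List (ℕ × Wd)), c ∉ al.map Prod.fst →
    al.lookup c = none := by
  intro al
  induction al with
  | nil => intro _; rfl
  | cons p r ih =>
    intro h
    have h1 : c ≠ p.1 := by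
      intro he; exact h (by simp [he])
    have h2 : c ∉ r.map Prod.fst := fun hm => h (by simp [hm])
    have hb : (c == p.1) = false := by
      simp [h1]
    simp [List.lookup, hb, ih h2]

lemma buildAl_keys : ∀ (es : List (ℕ × Wd × ℕ × Wd)) (Cp : Wd),
    (buildAl Cp es).map Prod.fst = es.map (fun e => e.1) := by
  intro es
  induction es with
  | nil => intro _; rfl
  | cons e r ih => intro Cp; simp [buildAl, ih]

lemma sChain_mkS_aux :
    ∀ (es : List (ℕ × Wd × ℕ × Wd)) (Cp : Wd) (al₁ : List (ℕ × Wd)),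
    (es.map (fun e => e.1)).Nodup →
    (∀ e ∈ es, e.1 ∉ al₁.map Prod.fst ∧ e.1 ≠ x) →
    SChain (mkS x (al₁ ++ buildAl Cp es)) Cp es := by
  intro es
  induction es with
  | nil => intro _ _ _ _; trivial
  | cons e r ih =>
    intro Cp al₁ hnd hdist
    rw [List.map_cons, List.nodup_cons] at hnd
    have he := hdist e (List.mem_cons_self)
    constructor
    · unfold mkS
      rw [if_neg he.2]
      have : (al₁ ++ buildAl Cp (e :: r)).lookup e.1 = some (Cp ++ e.1 :: e.2.1) := by
        rw [List.lookup_append]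
        rw [lookup_none al₁ he.1]
        simp [buildAl, List.lookup]
      simp [this]
    · have : al₁ ++ buildAl Cp (e :: r) = (al₁ ++ [(e.1, Cp ++ e.1 :: e.2.1)]) ++ buildAl e.2.2.2 r := by
        simp [buildAl]
      rw [this]
      apply ih e.2.2.2 (al₁ ++ [(e.1, Cp ++ e.1 :: e.2.1)])
      · exact hnd.2
      · intro e' he'
        have hd := hdist e' (List.mem_cons_of_mem _ he')
        refine ⟨?_, hd.2⟩
        intro hm
        rcases List.mem_map.mp hm with ⟨p, hp, hpe⟩
        rcases List.mem_append.mp hp with h | h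
        · exact hd.1 (List.mem_map.mpr ⟨p, h, hpe⟩)
        · simp at h
          have he1 : e'.1 = e.1 := by rw [← hpe, h]
          exact hnd.1 (he1 ▸ List.mem_map.mpr ⟨e', he', rfl⟩)

lemma sChain_mkS (es : List (ℕ × Wd × ℕ × Wd)) (Cp : Wd)
    (hnd : (es.map (fun e => e.1)).Nodup) (hne : ∀ e ∈ es, e.1 ≠ x) :
    SChain (mkS x (buildAl Cp es)) Cp es := by
  have := sChain_mkS_aux es Cp [] hnd (fun e he => ⟨by simp, hne e he⟩)
  simpa using this

lemma mkS_x (al : List (ℕ × Wd)) : mkS x al x = [x] := by simp [mkS]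

/-- SChain only depends on keys, A's and C's -/
lemma sChain_congr {s : ℕ → Wd} : ∀ (es es' : List (ℕ × Wd × ℕ × Wd)) (Cp : Wd),
    es.map (fun e => (e.1, e.2.1, e.2.2.2)) = es'.map (fun e => (e.1, e.2.1, e.2.2.2)) →
    SChain s Cp es → SChain s Cp es' := by
  intro es
  induction es with
  | nil => intro es' Cp h _; cases es' with
    | nil => trivial
    | cons e r => simp at h
  | cons e r ih =>
    intro es' Cp h hch
    cases es' with
    | nil => simp at h
    | cons e' r' =>
      simp only [List.map_cons, List.cons.injEq, Prod.mk.injEq] at h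
      obtain ⟨⟨h1, h2, h3⟩, h4⟩ := h
      exact ⟨by rw [← h1, ← h2]; exact hch.1, by rw [← h3]; exact ih r' e.2.2.2 h4 hch.2⟩

lemma lastC_congr : ∀ (es es' : List (ℕ × Wd × ℕ × Wd)) (Cp : Wd),
    es.map (fun e => e.2.2.2) = es'.map (fun e => e.2.2.2) →
    lastC Cp es = lastC Cp es' := by
  intro es
  induction es with
  | nil => intro es' Cp h; cases es' with
    | nil => rfl
    | cons e r => simp at h
  | cons e r ih =>
    intro es' Cp h
    cases es' with
    | nil => simp at h
    | cons e' r' =>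
      simp only [List.map_cons, List.cons.injEq] at h
      show lastC e.2.2.2 r = lastC e'.2.2.2 r'
      rw [← h.1]
      exact ih r' e.2.2.2 h.2

end F

section G
variable {x : ℕ} {pl : ℕ → Bool}

def SpansB (x : ℕ) (p : Wd) : Prop :=
  ∃ p₁ c p₂, p = p₁ ++ c :: p₂ ∧ c ≠ x ∧ x ∈ p₁ ∧ x ∈ p₂

lemma spans_base : ∀ (k : ℕ) {Q p₁ p₂ : Wd} {c : ℕ},
    p₁ ++ c :: p₂ = List.replicate k x ++ Q → c ≠ x → x ∈ p₂ → x ∈ Q := by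
  intro k
  induction k with
  | zero =>
    intro Q p₁ p₂ c heq _ hx
    simp at heq
    rw [← heq]
    simp [hx]
  | succ k ih =>
    intro Q p₁ p₂ c heq hc hx
    rw [List.replicate_succ, List.cons_append] at heq
    cases p₁ with
    | nil =>
      simp at heq
      exact absurd heq.1 hc
    | cons h t =>
      rw [List.cons_append] at heq
      have := List.cons.injEq h (t ++ c :: p₂) x (List.replicate k x ++ Q) ▸ heq
      exact ih this.2 hc hx

lemma spans_mid : ∀ (P : Wd) {k : ℕ} {Q p₁ p₂ : Wd} {c : ℕ},
    p₁ ++ c :: p₂ = P ++ List.replicate k x ++ Q →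
    c ≠ x → x ∉ P → x ∉ Q → x ∈ p₁ → x ∈ p₂ → False := by
  intro P
  induction P with
  | nil =>
    intro k Q p₁ p₂ c heq hc hP hQ hx1 hx2
    simp at heq
    exact hQ (spans_base k heq hc hx2)
  | cons d P' ih =>
    intro k Q p₁ p₂ c heq hc hP hQ hx1 hx2
    cases p₁ with
    | nil => cases hx1
    | cons h t =>
      simp only [List.cons_append, List.append_assoc] at heq
      rw [List.cons.injEq] at heq
      obtain ⟨hh, ht⟩ := heq
      rcases List.mem_cons.mp hx1 with hxh | hxt
      · exact hP (by rw [hxh, hh]; exact List.mem_cons_self)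
      · rw [← List.append_assoc] at ht
        exact ih ht hc (fun hm => hP (List.mem_cons_of_mem _ hm)) hQ hxt hx2

lemma spanContra (C B D : Wd) (hB : ∀ c ∈ B, pl c = false) (hxC : x ∉ C) (hxD : x ∉ D)
    (hs : SpansB x ((C ++ B ++ D).filter (fun c => (c == x) || pl c))) : False := by
  obtain ⟨p₁, c, p₂, heq, hc, hx1, hx2⟩ := hs
  rw [List.filter_append, List.filter_append, filter_blockx x B hB] at heq
  have hxC' : x ∉ C.filter (fun c => (c == x) || pl c) :=
    fun hm => hxC (List.mem_of_mem_filter hm)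
  have hxD' : x ∉ D.filter (fun c => (c == x) || pl c) :=
    fun hm => hxD (List.mem_of_mem_filter hm)
  exact spans_mid _ heq.symm hc hxC' hxD' hx1 hx2

lemma gatherAll : ∀ (ts : List (ℕ × Wd)) (C : Wd),
    (∀ p ∈ ts, pl p.1 = true ∧ ∀ c ∈ p.2, pl c = false) →
    (∀ c, c ≠ x → pl c = false → c ∈ C ++ flatT ts → 2 ≤ (C ++ flatT ts).count c) →
    SpansB x ((C ++ flatT ts).filter (fun c => (c == x) || pl c)) →
    ∃ ts' : List (ℕ × Wd),
      List.Forall₂ (fun p p' => p.1 = p'.1 ∧ p.2.Perm p'.2 ∧ GapFree x p'.2) ts ts' ∧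
      ∀ (M : Type uM) [Monoid M] (φ : ℕ → M), Sat M sigma1 → Sat M sigma2 →
        evalWord φ (C ++ flatT ts) = evalWord φ (C ++ flatT ts') := by
  intro ts
  induction ts with
  | nil =>
    intro C _ _ _
    exact ⟨[], List.Forall₂.nil, fun M _ φ _ _ => rfl⟩
  | cons p r ih =>
    intro C hOK hcnt hspan
    obtain ⟨l, B⟩ := p
    have hword : C ++ flatT ((l, B) :: r) = (C ++ [l]) ++ B ++ flatT r := by
      rw [flatT_cons]; simp
    have hOKp := hOK (l, B) (List.mem_cons_self)
    have hBpl : ∀ c ∈ B, pl c = false := hOKp.2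
    -- get gathered block B'
    have hgather : ∃ B' : Wd, B.Perm B' ∧ GapFree x B' ∧
        ∀ (M : Type uM) [Monoid M] (φ : ℕ → M), Sat M sigma1 → Sat M sigma2 →
          evalWord φ ((C ++ [l]) ++ B ++ flatT r)
            = evalWord φ ((C ++ [l]) ++ B' ++ flatT r) := by
      by_cases hGF : GapFree x B
      · exact ⟨B, List.Perm.refl B, hGF, fun M _ φ _ _ => rfl⟩
      · have hcnt' : ∀ c ∈ B, c ≠ x → 2 ≤ ((C ++ [l]) ++ B ++ flatT r).count c := by
          intro c hc hcx
          rw [← hword]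
          exact hcnt c hcx (hBpl c hc) (by rw [hword]; simp [hc])
        by_cases hxC : x ∈ C ++ [l]
        · exact gatherL (invL x B) B (C ++ [l]) (flatT r) le_rfl hxC hcnt'
        · by_cases hxD : x ∈ flatT r
          · exact gatherR (invR x B) B (C ++ [l]) (flatT r) le_rfl hxD hcnt'
          · exfalso
            apply spanContra (C ++ [l]) B (flatT r) hBpl hxC hxD
            rw [← hword]
            exact hspan
    obtain ⟨B', hperm, hGF', hev⟩ := hgather
    -- recurse
    have hpermfull : (C ++ flatT ((l, B) :: r)).Perm (C ++ flatT ((l, B') :: r)) := by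
      rw [flatT_cons, flatT_cons]
      exact ((((hperm.append_right (flatT r)).cons l).append_left C))
    have hfiltB : B.filter (fun c => (c == x) || pl c) = B'.filter (fun c => (c == x) || pl c) := by
      rw [filter_blockx x B hBpl, filter_blockx x B' (fun c hc => hBpl c (hperm.mem_iff.mpr hc)),
        hperm.count_eq]
    have hfilt : (C ++ flatT ((l, B) :: r)).filter (fun c => (c == x) || pl c)
        = (C ++ flatT ((l, B') :: r)).filter (fun c => (c == x) || pl c) := by
      rw [flatT_cons, flatT_cons]
      simp only [List.filter_append, List.filter_cons]
      rw [hfiltB]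
    have hcnt2 : ∀ c, c ≠ x → pl c = false →
        c ∈ (C ++ [l] ++ B') ++ flatT r → 2 ≤ ((C ++ [l] ++ B') ++ flatT r).count c := by
      intro c hcx hplc hmem
      have e2 : (C ++ [l] ++ B') ++ flatT r = C ++ flatT ((l, B') :: r) := by
        rw [flatT_cons]; simp
      rw [e2] at hmem ⊢
      rw [← hpermfull.count_eq]
      apply hcnt c hcx hplc
      exact hpermfull.mem_iff.mpr hmem
    have hspan2 : SpansB x (((C ++ [l] ++ B') ++ flatT r).filter (fun c => (c == x) || pl c)) := by
      have e2 : (C ++ [l] ++ B') ++ flatT r = C ++ flatT ((l, B') :: r) := by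
        rw [flatT_cons]; simp
      rw [e2, ← hfilt]
      exact hspan
    obtain ⟨r', hfa, hev'⟩ := ih (C ++ [l] ++ B')
      (fun p hp => hOK p (List.mem_cons_of_mem _ hp)) hcnt2 hspan2
    refine ⟨(l, B') :: r', List.Forall₂.cons ⟨rfl, hperm, hGF'⟩ hfa, ?_⟩
    intro M _ φ h1 h2
    have e3 : (C ++ [l] ++ B') ++ flatT r' = C ++ flatT ((l, B') :: r') := by
      rw [flatT_cons]; simp
    calc evalWord φ (C ++ flatT ((l, B) :: r))
        = evalWord φ ((C ++ [l]) ++ B ++ flatT r) := by rw [hword]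
      _ = evalWord φ ((C ++ [l]) ++ B' ++ flatT r) := hev M φ h1 h2
      _ = evalWord φ ((C ++ [l] ++ B') ++ flatT r) := by rw [List.append_assoc (C ++ [l])]
      _ = evalWord φ ((C ++ [l] ++ B') ++ flatT r') := hev' M φ h1 h2
      _ = evalWord φ (C ++ flatT ((l, B') :: r')) := by rw [e3]

end G

section H1
variable {x y : ℕ} {pl : ℕ → Bool}

def F2R (x : ℕ) (p p' : ℕ × Wd) : Prop := p.1 = p'.1 ∧ p.2.Perm p'.2 ∧ GapFree x p'.2

lemma forall₂_keys {ts ts' : List (ℕ × Wd)} (h : List.Forall₂ (F2R x) ts ts') :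
    ts.map Prod.fst = ts'.map Prod.fst := by
  induction h with
  | nil => rfl
  | cons hpq _ ih => simp [ih, hpq.1]

lemma pattT_congr {ts ts' : List (ℕ × Wd)} (y : ℕ) (h : List.Forall₂ (F2R x) ts ts') :
    pattT y ts = pattT y ts' := by
  induction h with
  | nil => rfl
  | cons hpq _ ih =>
    unfold pattT at *
    simp only [List.flatMap_cons, ih]
    rw [hpq.1, hpq.2.1.count_eq]

lemma all_x_replicate : ∀ {B : Wd}, (∀ c ∈ B, c = x) → B = List.replicate (B.count x) x := by
  intro B
  induction B with
  | nil => intro _; rfl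
  | cons c t ih =>
    intro h
    have hc : c = x := h c (List.mem_cons_self)
    subst hc
    rw [List.count_cons_self, List.replicate_succ]
    exact congrArg _ (ih (fun d hd => h d (List.mem_cons_of_mem _ hd)))

lemma flatT_map_blkW (es : List (ℕ × Wd × ℕ × Wd)) :
    flatT (es.map (fun e => (e.1, blkW x e))) = blocksW x es := by
  induction es with
  | nil => rfl
  | cons e r ih =>
    rw [List.map_cons, flatT_cons, ih]
    rfl

lemma count_blkW (hy : y ≠ x) (e : ℕ × Wd × ℕ × Wd) :
    (blkW x e).count y = e.2.1.count y + e.2.2.2.count y := by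
  simp [blkW, List.count_append, List.count_replicate, hy, Ne.symm hy]

lemma count_blkW_x (e : ℕ × Wd × ℕ × Wd) (hA : x ∉ e.2.1) (hC : x ∉ e.2.2.2) :
    (blkW x e).count x = e.2.2.1 := by
  simp [blkW, List.count_append, List.count_replicate,
    List.count_eq_zero_of_not_mem hA, List.count_eq_zero_of_not_mem hC]

lemma pattT_map_blkW_x (es : List (ℕ × Wd × ℕ × Wd))
    (h : ∀ e ∈ es, x ∉ e.2.1 ∧ x ∉ e.2.2.2) :
    pattT x (es.map (fun e => (e.1, blkW x e))) = pattD x es := by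
  induction es with
  | nil => rfl
  | cons e r ih =>
    have he := h e (List.mem_cons_self)
    unfold pattT pattD
    simp only [List.map_cons, List.flatMap_cons]
    rw [count_blkW_x e he.1 he.2]
    congr 1
    exact ih (fun e' he' => h e' (List.mem_cons_of_mem _ he'))

def StripR (e e' : ℕ × Wd × ℕ × Wd) : Prop :=
  e.1 = e'.1 ∧ e.2.1 = e'.2.1 ∧ e.2.2.2 = e'.2.2.2

lemma strip_map {es es' : List (ℕ × Wd × ℕ × Wd)} (h : List.Forall₂ StripR es es') :
    es.map (fun e => (e.1, e.2.1, e.2.2.2)) = es'.map (fun e => (e.1, e.2.1, e.2.2.2)) := by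
  induction h with
  | nil => rfl
  | cons hpq _ ih => simp [ih, hpq.1, hpq.2.1, hpq.2.2]

lemma pattT_map_blkW_y (hy : y ≠ x) {es es' : List (ℕ × Wd × ℕ × Wd)}
    (h : List.Forall₂ StripR es es') :
    pattT y (es.map (fun e => (e.1, blkW x e))) = pattT y (es'.map (fun e => (e.1, blkW x e))) := by
  induction h with
  | nil => rfl
  | cons hpq _ ih =>
    unfold pattT
    simp only [List.map_cons, List.flatMap_cons]
    rw [show (blkW x _).count y = _ from count_blkW hy _, count_blkW hy _]
    rw [hpq.1, hpq.2.1, hpq.2.2]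
    unfold pattT at ih
    rw [ih]

lemma alignQ : ∀ (es : List (ℕ × Wd × ℕ × Wd)) (qts : List (ℕ × Wd)),
    es.map (fun e => e.1) = qts.map Prod.fst →
    (∀ p ∈ qts, ∀ c ∈ p.2, c = x) →
    ∃ es' : List (ℕ × Wd × ℕ × Wd),
      List.Forall₂ StripR es es' ∧ pattD x es' = flatT qts := by
  intro es
  induction es with
  | nil =>
    intro qts hk _
    cases qts with
    | nil => exact ⟨[], List.Forall₂.nil, rfl⟩
    | cons q r => simp at hk
  | cons e r ih =>
    intro qts hk hq
    cases qts with
    | nil => simp at hk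
    | cons qp qr =>
      simp only [List.map_cons, List.cons.injEq] at hk
      obtain ⟨es', hfa, hpatt⟩ := ih qr hk.2 (fun p hp => hq p (List.mem_cons_of_mem _ hp))
      refine ⟨(e.1, e.2.1, qp.2.count x, e.2.2.2) :: es', List.Forall₂.cons ⟨rfl, rfl, rfl⟩ hfa, ?_⟩
      unfold pattD
      simp only [List.flatMap_cons]
      rw [flatT_cons]
      unfold pattD at hpatt
      rw [hpatt, hk.1]
      congr 2
      exact (all_x_replicate (hq qp (List.mem_cons_self))).symm

lemma nodup_of_count_le_one {l : Wd} (h : ∀ c ∈ l, l.count c ≤ 1) : l.Nodup := by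
  rw [List.nodup_iff_count_le_one]
  intro a
  by_cases ha : a ∈ l
  · exact h a ha
  · simp [List.count_eq_zero_of_not_mem ha]

end H1
section H2
variable {x y : ℕ} {pl : ℕ → Bool}

lemma forall₂_ok {ts ts' : List (ℕ × Wd)} (h : List.Forall₂ (F2R x) ts ts')
    (hok : ∀ p ∈ ts, pl p.1 = true ∧ ∀ c ∈ p.2, pl c = false) :
    ∀ p' ∈ ts', pl p'.1 = true ∧ ∀ c ∈ p'.2, pl c = false := by
  induction h with
  | nil => intro p hp; cases hp
  | @cons a b l₁ l₂ hab _ ih =>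
    intro p' hp'
    rcases List.mem_cons.mp hp' with h | h
    · subst h
      have := hok a (List.mem_cons_self)
      exact ⟨hab.1 ▸ this.1, fun c hc => this.2 c (hab.2.1.mem_iff.mpr hc)⟩
    · exact ih (fun p hp => hok p (List.mem_cons_of_mem _ hp)) p' h

lemma forall₂_gf {ts ts' : List (ℕ × Wd)} (h : List.Forall₂ (F2R x) ts ts') :
    ∀ p' ∈ ts', GapFree x p'.2 := by
  induction h with
  | nil => intro p hp; cases hp
  | cons hab _ ih =>
    intro p' hp'
    rcases List.mem_cons.mp hp' with h | h
    · subst h; exact hab.2.2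
    · exact ih p' h

lemma strip_mem_right {es es' : List (ℕ × Wd × ℕ × Wd)} (h : List.Forall₂ StripR es es') :
    ∀ e' ∈ es', ∃ e ∈ es, StripR e e' := by
  induction h with
  | nil => intro e he; cases he
  | @cons a b l₁ l₂ hab _ ih =>
    intro e' he'
    rcases List.mem_cons.mp he' with h | h
    · exact ⟨a, List.mem_cons_self, h ▸ hab⟩
    · obtain ⟨e, he, hr⟩ := ih e' h
      exact ⟨e, List.mem_cons_of_mem _ he, hr⟩

lemma runSplitAll : ∀ (ts' : List (ℕ × Wd)), (∀ p ∈ ts', GapFree x p.2) →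
    ∃ es : List (ℕ × Wd × ℕ × Wd),
      es.map (fun e => (e.1, blkW x e)) = ts' ∧ ∀ e ∈ es, x ∉ e.2.1 ∧ x ∉ e.2.2.2 := by
  intro ts'
  induction ts' with
  | nil => intro _; exact ⟨[], rfl, by simp⟩
  | cons p r ih =>
    intro h
    obtain ⟨A, k, C, hsplit, hA, hC⟩ := runSplit (h p (List.mem_cons_self))
    obtain ⟨es, hmap, hxs⟩ := ih (fun p' hp' => h p' (List.mem_cons_of_mem _ hp'))
    refine ⟨(p.1, A, k, C) :: es, ?_, ?_⟩
    · rw [List.map_cons, hmap]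
      congr 1
      show (p.1, blkW x (p.1, A, k, C)) = p
      have : blkW x (p.1, A, k, C) = p.2 := by
        unfold blkW
        exact hsplit.symm
      rw [this]
    · intro e he
      rcases List.mem_cons.mp he with h' | h'
      · subst h'; exact ⟨hA, hC⟩
      · exact hxs e h'

end H2
section H3
variable {x : ℕ} {pl : ℕ → Bool}

lemma fixSide (x : ℕ) (pl : ℕ → Bool) (w q : Wd)
    (hplx : pl x = false)
    (hlin : ∀ c, pl c = true → w.count c ≤ 1)
    (hcnt : ∀ c ∈ w, pl c = false → c ≠ x → 2 ≤ w.count c)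
    (hspan : SpansB x (w.filter (fun c => (c == x) || pl c)))
    (hqpl : q.filter pl = w.filter pl)
    (hqmem : ∀ c ∈ q, c = x ∨ pl c = true) :
    ∃ ww : Wd,
      ww.filter (fun c => (c == x) || pl c) = q ∧
      (∀ y : ℕ, y ≠ x →
        ww.filter (fun c => (c == y) || pl c) = w.filter (fun c => (c == y) || pl c)) ∧
      ww.filter pl = w.filter pl ∧
      ∀ (M : Type uM) [Monoid M] (φ : ℕ → M), Sat M sigma1 → Sat M sigma2 →
        Sat M (w.filter (fun c => (c == x) || pl c), q) →
        evalWord φ w = evalWord φ ww := by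
  classical
  obtain ⟨B₀, ts, hw, hOK⟩ := exists_parse pl w
  rw [show flatB B₀ ts = B₀ ++ flatT ts from rfl] at hw
  -- (1) gather the initial block
  have hg0 : ∃ B₀', B₀.Perm B₀' ∧ GapFree x B₀' ∧
      ∀ (M : Type uM) [Monoid M] (φ : ℕ → M), Sat M sigma1 → Sat M sigma2 →
        evalWord φ (B₀ ++ flatT ts) = evalWord φ (B₀' ++ flatT ts) := by
    by_cases hGF : GapFree x B₀
    · exact ⟨B₀, List.Perm.refl _, hGF, fun M _ φ _ _ => rfl⟩
    · by_cases hxD : x ∈ flatT ts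
      · have hcnt' : ∀ c ∈ B₀, c ≠ x → 2 ≤ (([] : Wd) ++ B₀ ++ flatT ts).count c := by
          intro c hc hcx
          rw [show (([] : Wd) ++ B₀ ++ flatT ts) = w from by rw [hw]; simp]
          exact hcnt c (by rw [hw]; simp [hc]) (hOK.1 c hc) hcx
        obtain ⟨B', hperm, hGF', hev⟩ :=
          gatherR (invR x B₀) B₀ [] (flatT ts) le_rfl hxD hcnt'
        refine ⟨B', hperm, hGF', ?_⟩
        intro M _ φ h1 h2
        simpa using hev M φ h1 h2
      · exfalso
        apply spanContra (x := x) (pl := pl) [] B₀ (flatT ts) hOK.1 (by simp) hxD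
        rw [show (([] : Wd) ++ B₀ ++ flatT ts) = w from by rw [hw]; simp]
        exact hspan
  obtain ⟨B₀', hperm0, hGF0, hev0⟩ := hg0
  have hpermw : w.Perm (B₀' ++ flatT ts) := by
    rw [hw]; exact hperm0.append_right _
  have hB₀'pl : ∀ c ∈ B₀', pl c = false := fun c hc => hOK.1 c (hperm0.mem_iff.mpr hc)
  -- filter px invariance under block perm
  have hfilt0 : ∀ (z : ℕ), (B₀' ++ flatT ts).filter (fun c => (c == z) || pl c)
      = w.filter (fun c => (c == z) || pl c) := by
    intro z
    rw [hw, List.filter_append, List.filter_append, filter_blockx z B₀ hOK.1,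
      filter_blockx z B₀' hB₀'pl, hperm0.count_eq]
  -- (2) gather all blocks
  have hcnt2 : ∀ c, c ≠ x → pl c = false → c ∈ B₀' ++ flatT ts →
      2 ≤ (B₀' ++ flatT ts).count c := by
    intro c hcx hplc hmem
    rw [← hpermw.count_eq]
    exact hcnt c (hpermw.mem_iff.mpr hmem) hplc hcx
  have hspan2 : SpansB x ((B₀' ++ flatT ts).filter (fun c => (c == x) || pl c)) := by
    rw [hfilt0 x]; exact hspan
  obtain ⟨ts', hfa, hev2⟩ := gatherAll ts B₀' hOK.2 hcnt2 hspan2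
  have hkeys : ts.map Prod.fst = ts'.map Prod.fst := forall₂_keys hfa
  have hts'OK := forall₂_ok (pl := pl) hfa hOK.2
  have hts'GF := forall₂_gf hfa
  -- filter invariance for the ts-part
  have hfiltT : ∀ (z : ℕ), (B₀' ++ flatT ts').filter (fun c => (c == z) || pl c)
      = w.filter (fun c => (c == z) || pl c) := by
    intro z
    rw [← hfilt0 z, List.filter_append, List.filter_append,
      filter_flatT_px ts hOK.2, filter_flatT_px ts' hts'OK, pattT_congr z hfa]
  -- (3) split runs
  obtain ⟨A₀, k₀, C₀, hB0s, hxA₀, hxC₀⟩ := runSplit hGF0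
  obtain ⟨es, hesmap, hesx⟩ := runSplitAll ts' hts'GF
  have hkeys2 : es.map (fun e => e.1) = ts'.map Prod.fst := by
    rw [← hesmap, List.map_map]; rfl
  have hplw : w.filter pl = ts.map Prod.fst := by
    rw [hw]
    exact filter_flatB_pl B₀ ts hOK
  have hnd : (es.map (fun e => e.1)).Nodup := by
    rw [hkeys2, ← hkeys, ← hplw]
    apply nodup_of_count_le_one
    intro c hc
    have hplc : pl c = true := by
      have := List.mem_filter.mp hc
      exact this.2
    calc (w.filter pl).count c ≤ w.count c := (List.filter_sublist (l := w)).count_le c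
      _ ≤ 1 := hlin c hplc
  have hkx : ∀ e ∈ es, e.1 ≠ x := by
    intro e he hex
    have : (e.1, blkW x e) ∈ ts' := by
      rw [← hesmap]; exact List.mem_map_of_mem he
    have := (hts'OK _ this).1
    rw [hex, hplx] at this
    exact Bool.false_ne_true this
  -- keys of ts' blocks pl-properties for es
  have hesblk : ∀ e ∈ es, (∀ c ∈ e.2.1, pl c = false) ∧ (∀ c ∈ e.2.2.2, pl c = false) := by
    intro e he
    have hmem : (e.1, blkW x e) ∈ ts' := by
      rw [← hesmap]; exact List.mem_map_of_mem he
    have hbl := (hts'OK _ hmem).2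
    constructor
    · intro c hc; exact hbl c (by unfold blkW; simp [hc])
    · intro c hc; exact hbl c (by unfold blkW; simp [hc])
  -- substitution
  set s : ℕ → Wd := mkS x (buildAl C₀ es) with hsdef
  have hsch : SChain s C₀ es := sChain_mkS es C₀ hnd hkx
  have hsx : s x = [x] := mkS_x _
  have hkey0 : C₀ ++ blocksW x es = (pattD x es).flatMap s ++ lastC C₀ es :=
    blocksW_eq hsx es C₀ hsch
  -- p identity
  have hcntB0 : B₀.count x = k₀ := by
    rw [hperm0.count_eq, hB0s]
    simp [List.count_append, List.count_replicate,
      List.count_eq_zero_of_not_mem hxA₀, List.count_eq_zero_of_not_mem hxC₀]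
  have hp : w.filter (fun c => (c == x) || pl c) = List.replicate k₀ x ++ pattD x es := by
    rw [hw, show B₀ ++ flatT ts = flatB B₀ ts from rfl, filter_flatB_px B₀ ts hOK, hcntB0,
      pattT_congr x hfa, ← hesmap, pattT_map_blkW_x es hesx]
  -- q decomposition
  obtain ⟨Q₀, qts, hq, hqOK⟩ := exists_parse pl q
  rw [show flatB Q₀ qts = Q₀ ++ flatT qts from rfl] at hq
  have hQ0x : ∀ c ∈ Q₀, c = x := by
    intro c hc
    rcases hqmem c (by rw [hq]; simp [hc]) with h | h
    · exact h
    · rw [hqOK.1 c hc] at h; exact absurd h (Bool.false_ne_true)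
  have hqtsx : ∀ p ∈ qts, ∀ c ∈ p.2, c = x := by
    intro p hp c hc
    rcases hqmem c (by
      rw [hq]
      have : c ∈ flatT qts := by
        unfold flatT
        exact List.mem_flatMap.mpr ⟨p, hp, by simp [hc]⟩
      simp [this]) with h | h
    · exact h
    · rw [(hqOK.2 p hp).2 c hc] at h; exact absurd h (Bool.false_ne_true)
  have hqkeys : es.map (fun e => e.1) = qts.map Prod.fst := by
    have h1 : q.filter pl = qts.map Prod.fst := by
      rw [hq, show Q₀ ++ flatT qts = flatB Q₀ qts from rfl]
      exact filter_flatB_pl Q₀ qts hqOK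
    rw [hkeys2, ← hkeys, ← hplw, ← hqpl, h1]
  obtain ⟨es', hstr, hpattq⟩ := alignQ es qts hqkeys hqtsx
  have hq2 : q = List.replicate (Q₀.count x) x ++ pattD x es' := by
    rw [hq, hpattq]
    congr 1
    exact all_x_replicate hQ0x
  -- SChain and lastC for es'
  have hsch' : SChain s C₀ es' := sChain_congr es es' C₀ (strip_map hstr) hsch
  have hlastC : lastC C₀ es = lastC C₀ es' := by
    apply lastC_congr
    have := congrArg (List.map (fun t : ℕ × Wd × Wd => t.2.2)) (strip_map hstr)
    simpa [List.map_map, Function.comp_def] using this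
  have hkey0' : C₀ ++ blocksW x es' = (pattD x es').flatMap s ++ lastC C₀ es' :=
    blocksW_eq hsx es' C₀ hsch'
  -- result word
  set m₀ := Q₀.count x with hm0
  set ww : Wd := flatB (A₀ ++ List.replicate m₀ x ++ C₀) (es'.map (fun e => (e.1, blkW x e)))
    with hwwdef
  -- es' x-free and pl-false blocks
  have hesx' : ∀ e' ∈ es', x ∉ e'.2.1 ∧ x ∉ e'.2.2.2 := by
    intro e' he'
    obtain ⟨e, he, hr⟩ := strip_mem_right hstr e' he'
    rw [← hr.2.1, ← hr.2.2]
    exact hesx e he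
  have hesblk' : ∀ e' ∈ es', (∀ c ∈ e'.2.1, pl c = false) ∧ (∀ c ∈ e'.2.2.2, pl c = false) := by
    intro e' he'
    obtain ⟨e, he, hr⟩ := strip_mem_right hstr e' he'
    rw [← hr.2.1, ← hr.2.2]
    exact hesblk e he
  have hkx' : ∀ e' ∈ es', pl e'.1 = true := by
    intro e' he'
    obtain ⟨e, he, hr⟩ := strip_mem_right hstr e' he'
    rw [← hr.1]
    have hmem : (e.1, blkW x e) ∈ ts' := by
      rw [← hesmap]; exact List.mem_map_of_mem he
    exact (hts'OK _ hmem).1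
  have hA₀pl : ∀ c ∈ A₀, pl c = false := by
    intro c hc
    exact hB₀'pl c (by rw [hB0s]; simp [hc])
  have hC₀pl : ∀ c ∈ C₀, pl c = false := by
    intro c hc
    exact hB₀'pl c (by rw [hB0s]; simp [hc])
  have hwwOK : BlocksOK pl (A₀ ++ List.replicate m₀ x ++ C₀)
      (es'.map (fun e => (e.1, blkW x e))) := by
    constructor
    · intro c hc
      rcases List.mem_append.mp hc with hc | hc
      · rcases List.mem_append.mp hc with hc | hc
        · exact hA₀pl c hc
        · rw [List.eq_of_mem_replicate hc]; exact hplx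
      · exact hC₀pl c hc
    · intro p hp
      obtain ⟨e', he', hpe⟩ := List.mem_map.mp hp
      subst hpe
      refine ⟨hkx' e' he', ?_⟩
      intro c hc
      unfold blkW at hc
      rcases List.mem_append.mp hc with hc | hc
      · rcases List.mem_append.mp hc with hc | hc
        · exact (hesblk' e' he').1 c hc
        · rw [List.eq_of_mem_replicate hc]; exact hplx
      · exact (hesblk' e' he').2 c hc
  have hwwB0cnt : (A₀ ++ List.replicate m₀ x ++ C₀).count x = m₀ := by
    simp [List.count_append, List.count_replicate,
      List.count_eq_zero_of_not_mem hxA₀, List.count_eq_zero_of_not_mem hxC₀]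
  -- conclusion 1 : filter px ww = q
  have hc1 : ww.filter (fun c => (c == x) || pl c) = q := by
    rw [hwwdef, filter_flatB_px _ _ hwwOK, hwwB0cnt, pattT_map_blkW_x es' hesx', hq2]
  -- conclusion 2 : filter py ww = filter py w for y ≠ x
  have hc2 : ∀ y : ℕ, y ≠ x →
      ww.filter (fun c => (c == y) || pl c) = w.filter (fun c => (c == y) || pl c) := by
    intro y hy
    rw [hwwdef, filter_flatB_px _ _ hwwOK, ← hfiltT y,
      show B₀' ++ flatT ts' = flatB B₀' ts' from rfl,
      filter_flatB_px _ _ ⟨hB₀'pl, hts'OK⟩]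
    congr 1
    · congr 1
      rw [hB0s]
      simp [List.count_append, List.count_replicate, hy, Ne.symm hy]
    · rw [← hesmap, pattT_map_blkW_y hy hstr]
  -- conclusion 3 : filter pl ww = filter pl w
  have hkeyses' : es'.map (fun e => e.1) = es.map (fun e => e.1) := by
    have := congrArg (List.map (fun t : ℕ × Wd × Wd => t.1)) (strip_map hstr)
    simp only [List.map_map] at this
    exact this.symm
  have hc3 : ww.filter pl = w.filter pl := by
    rw [hwwdef, filter_flatB_pl _ _ hwwOK, List.map_map]
    show es'.map (fun e => e.1) = _
    rw [hkeyses', hkeys2, ← hkeys, ← hplw]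
  -- conclusion 4 : evaluation
  have hc4 : ∀ (M : Type uM) [Monoid M] (φ : ℕ → M), Sat M sigma1 → Sat M sigma2 →
      Sat M (w.filter (fun c => (c == x) || pl c), q) →
      evalWord φ w = evalWord φ ww := by
    intro M _ φ h1 h2 hα
    have e1 : evalWord φ w = evalWord φ (B₀' ++ flatT ts') := by
      rw [hw]
      exact (hev0 M φ h1 h2).trans (hev2 M φ h1 h2)
    have wform : B₀' ++ flatT ts'
        = A₀ ++ ((w.filter (fun c => (c == x) || pl c)).flatMap s ++ lastC C₀ es) := by
      rw [← hesmap, flatT_map_blkW, hB0s, hp, List.flatMap_append, flatMap_replicate hsx]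
      simp only [List.append_assoc]
      rw [hkey0]
    have wwform : ww = A₀ ++ (q.flatMap s ++ lastC C₀ es) := by
      rw [hwwdef, show ∀ G tss, flatB G tss = G ++ flatT tss from fun _ _ => rfl,
        flatT_map_blkW, hq2, List.flatMap_append, flatMap_replicate hsx]
      simp only [List.append_assoc]
      rw [hkey0', ← hlastC]
    rw [e1, wform, wwform]
    simp only [evalWord_append]
    congr 1
    congr 1
    rw [evalWord_flatMap, evalWord_flatMap]
    exact hα (fun c => evalWord φ (s c))
  exact ⟨ww, hc1, hc2, hc3, hc4⟩

end H3
section I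
variable {x : ℕ} {pl : ℕ → Bool}

lemma restrict_univ (w : Wd) : restrict w Set.univ = w := by
  unfold restrict
  apply List.filter_eq_self.mpr
  intro a _
  exact @decide_eq_true _ (Classical.propDecidable _) (Set.mem_univ a)

lemma count_filter_self (c : ℕ) (p : ℕ → Bool) (l : Wd) (h : p c = true) :
    (l.filter p).count c = l.count c := by
  induction l with
  | nil => rfl
  | cons a t ih =>
    by_cases hac : a = c
    · subst hac
      rw [List.filter_cons, if_pos h]
      simp [List.count_cons, ih]
    · rw [List.filter_cons]
      by_cases hpa : p a = true
      · rw [if_pos hpa]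
        simp [List.count_cons, Ne.symm hac, ih]
      · rw [if_neg hpa]
        simp [List.count_cons, Ne.symm hac, ih, hac]

lemma noLinBetween_of_not_spans (w : Wd) (x : ℕ) (pl : ℕ → Bool)
    (hlin : ∀ c, w.count c = 1 ↔ pl c = true)
    (h2x : 2 ≤ w.count x)
    (hns : ¬ SpansB x (w.filter (fun c => (c == x) || pl c))) :
    NoLinBetween w x := by
  intro i k j hik hkj hjlen hxi hxj hclin
  apply hns
  have hilen : i < w.length := by omega
  have hklen : k < w.length := by omega
  set c := w.getD k 0 with hc
  have hplc : pl c = true := (hlin c).mp hclin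
  have hcx : c ≠ x := by
    intro h
    rw [h] at hclin
    unfold linW at hclin
    simp at hclin
    omega
  -- decompose w at position k
  have hdecomp : w = w.take k ++ c :: w.drop (k + 1) := by
    rw [hc, List.getD_eq_getElem w 0 hklen]
    conv_lhs => rw [← List.take_append_drop k w]
    congr 1
    exact (List.drop_eq_getElem_cons hklen).symm ▸ rfl
  have hxtake : x ∈ w.take k := by
    have h1 : (w.take k).length = k := by
      rw [List.length_take]; omega
    have h2 : (w.take k).getD i 0 = w.getD i 0 := by
      rw [List.getD_eq_getElem _ 0 (by omega : i < (w.take k).length),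
        List.getD_eq_getElem w 0 hilen]
      exact List.getElem_take ..
    rw [← hxi, ← h2]
    rw [List.getD_eq_getElem _ 0 (by omega : i < (w.take k).length)]
    exact List.getElem_mem _
  have hxdrop : x ∈ w.drop (k + 1) := by
    have hlen : j - (k + 1) < (w.drop (k + 1)).length := by
      rw [List.length_drop]; omega
    have h2 : (w.drop (k + 1)).getD (j - (k + 1)) 0 = w.getD j 0 := by
      rw [List.getD_eq_getElem _ 0 hlen, List.getD_eq_getElem w 0 hjlen]
      rw [List.getElem_drop]
      congr 1
      omega
    rw [← hxj, ← h2, List.getD_eq_getElem _ 0 hlen]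
    exact List.getElem_mem _
  refine ⟨(w.take k).filter (fun c => (c == x) || pl c), c,
    (w.drop (k + 1)).filter (fun c => (c == x) || pl c), ?_, hcx, ?_, ?_⟩
  · conv_lhs => rw [hdecomp]
    rw [List.filter_append, List.filter_cons, if_pos (by simp [hplc])]
  · exact List.mem_filter.mpr ⟨hxtake, by simp⟩
  · exact List.mem_filter.mpr ⟨hxdrop, by simp⟩

lemma restrict_eq_filter_px (w : Wd) (u : Wd) (y : ℕ) :
    restrict w ({y} ∪ linW u) = w.filter (fun c => (c == y) || (u.count c == 1)) := by
  apply restrict_eq_filter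
  intro a
  unfold linW
  simp [beq_iff_eq]

lemma restrict_eq_filter_pl (w : Wd) (u : Wd) :
    restrict w (linW u) = w.filter (fun c => u.count c == 1) := by
  apply restrict_eq_filter
  intro a
  unfold linW
  simp [beq_iff_eq]

end I
section J

lemma mainLoop (u v : Wd) (pl : ℕ → Bool)
    (hplu : ∀ c, pl c = true ↔ u.count c = 1) :
    ∀ (xs : List ℕ) (w z : Wd),
    (∀ c, w.count c = 1 ↔ u.count c = 1) →
    (∀ c, 2 ≤ w.count c ↔ 2 ≤ u.count c) →
    (∀ c, z.count c = 1 ↔ u.count c = 1) →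
    (∀ c, 2 ≤ z.count c ↔ 2 ≤ u.count c) →
    (w.filter pl = z.filter pl) →
    (∀ y : ℕ,
      (w.filter (fun c => (c == y) || pl c) = u.filter (fun c => (c == y) || pl c) ∧
       z.filter (fun c => (c == y) || pl c) = v.filter (fun c => (c == y) || pl c)) ∨
      w.filter (fun c => (c == y) || pl c) = z.filter (fun c => (c == y) || pl c)) →
    (∀ y : ℕ, 2 ≤ u.count y → y ∉ xs →
      w.filter (fun c => (c == y) || pl c) = z.filter (fun c => (c == y) || pl c) ∨
      (¬ SpansB y (w.filter (fun c => (c == y) || pl c)) ∧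
       ¬ SpansB y (z.filter (fun c => (c == y) || pl c)))) →
    (∀ (M : Type uM) [Monoid M] (φ : ℕ → M), Sat M sigma1 → Sat M sigma2 →
      (∀ y : ℕ, Sat M (u.filter (fun c => (c == y) || pl c),
        v.filter (fun c => (c == y) || pl c))) →
      evalWord φ u = evalWord φ w) →
    (∀ (M : Type uM) [Monoid M] (φ : ℕ → M), Sat M sigma1 → Sat M sigma2 →
      (∀ y : ℕ, Sat M (u.filter (fun c => (c == y) || pl c),
        v.filter (fun c => (c == y) || pl c))) →
      evalWord φ v = evalWord φ z) →
    ∃ w' z' : Wd,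
      (∀ c, w'.count c = 1 ↔ u.count c = 1) ∧
      (∀ c, 2 ≤ w'.count c ↔ 2 ≤ u.count c) ∧
      (∀ c, z'.count c = 1 ↔ u.count c = 1) ∧
      (∀ c, 2 ≤ z'.count c ↔ 2 ≤ u.count c) ∧
      w'.filter pl = z'.filter pl ∧
      (∀ y : ℕ, 2 ≤ u.count y →
        w'.filter (fun c => (c == y) || pl c) = z'.filter (fun c => (c == y) || pl c) ∨
        (¬ SpansB y (w'.filter (fun c => (c == y) || pl c)) ∧
         ¬ SpansB y (z'.filter (fun c => (c == y) || pl c)))) ∧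
      (∀ (M : Type uM) [Monoid M] (φ : ℕ → M), Sat M sigma1 → Sat M sigma2 →
        (∀ y : ℕ, Sat M (u.filter (fun c => (c == y) || pl c),
          v.filter (fun c => (c == y) || pl c))) →
        evalWord φ u = evalWord φ w') ∧
      (∀ (M : Type uM) [Monoid M] (φ : ℕ → M), Sat M sigma1 → Sat M sigma2 →
        (∀ y : ℕ, Sat M (u.filter (fun c => (c == y) || pl c),
          v.filter (fun c => (c == y) || pl c))) →
        evalWord φ v = evalWord φ z') := by
  intro xs
  induction xs with
  | nil =>
    intro w z hw1 hw2 hz1 hz2 hwzpl hfilts hdone hchw hchz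
    exact ⟨w, z, hw1, hw2, hz1, hz2, hwzpl,
      fun y hy => hdone y hy (List.not_mem_nil (a := y)), hchw, hchz⟩
  | cons a xs ih =>
    intro w z hw1 hw2 hz1 hz2 hwzpl hfilts hdone hchw hchz
    by_cases h2a : 2 ≤ u.count a
    case neg =>
      apply ih w z hw1 hw2 hz1 hz2 hwzpl hfilts _ hchw hchz
      intro y hy hyn
      by_cases hya : y = a
      · exact absurd (hya ▸ hy) h2a
      · exact hdone y hy (by simp [hya, hyn])
    case pos =>
      by_cases heq : w.filter (fun c => (c == a) || pl c) = z.filter (fun c => (c == a) || pl c)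
      · apply ih w z hw1 hw2 hz1 hz2 hwzpl hfilts _ hchw hchz
        intro y hy hyn
        by_cases hya : y = a
        · subst hya; exact Or.inl heq
        · exact hdone y hy (by simp [hya, hyn])
      · have hfa := (hfilts a).resolve_right heq
        have hplxa : pl a = false := by
          cases hpa : pl a
          · rfl
          · exfalso
            have := (hplu a).mp hpa
            omega
        have hlinw : ∀ c, pl c = true → w.count c ≤ 1 := by
          intro c hc
          have := (hw1 c).mpr ((hplu c).mp hc)
          omega
        have hlinz : ∀ c, pl c = true → z.count c ≤ 1 := by
          intro c hc
          have := (hz1 c).mpr ((hplu c).mp hc)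
          omega
        have hcntw : ∀ c ∈ w, pl c = false → c ≠ a → 2 ≤ w.count c := by
          intro c hc hplc _
          have h1 : 0 < w.count c := List.count_pos_iff.mpr hc
          have h2 : w.count c ≠ 1 := by
            intro h
            have := (hplu c).mpr ((hw1 c).mp h)
            rw [this] at hplc
            simp at hplc
          omega
        have hcntz : ∀ c ∈ z, pl c = false → c ≠ a → 2 ≤ z.count c := by
          intro c hc hplc _
          have h1 : 0 < z.count c := List.count_pos_iff.mpr hc
          have h2 : z.count c ≠ 1 := by
            intro h
            have := (hplu c).mpr ((hz1 c).mp h)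
            rw [this] at hplc
            simp at hplc
          omega
        by_cases hsw : SpansB a (w.filter (fun c => (c == a) || pl c))
        · -- fix on the w side
          have hqpl : (z.filter (fun c => (c == a) || pl c)).filter pl = w.filter pl := by
            rw [List.filter_filter]
            rw [show (z.filter fun c => pl c && ((c == a) || pl c)) = z.filter pl from
              List.filter_congr (by intro c _; cases hpc : pl c <;> simp [hpc])]
            exact hwzpl.symm
          have hqmem : ∀ c ∈ z.filter (fun c => (c == a) || pl c), c = a ∨ pl c = true := by
            intro c hc
            have := (List.mem_filter.mp hc).2
            simp only [Bool.or_eq_true, beq_iff_eq] at this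
            exact this
          obtain ⟨ww, hq1, hq2y, hq3, hq4⟩ :=
            fixSide a pl w (z.filter (fun c => (c == a) || pl c)) hplxa hlinw hcntw hsw hqpl hqmem
          have hcntww : ∀ c, ww.count c = (if c = a then z.count c else w.count c) := by
            intro c
            by_cases hca : c = a
            · subst hca
              rw [if_pos rfl]
              have h1 := count_filter_self c (fun c' => (c' == c) || pl c') ww (by simp)
              have h2 := count_filter_self c (fun c' => (c' == c) || pl c') z (by simp)
              rw [← h1, hq1, h2]
            · rw [if_neg hca]
              have h1 := count_filter_self c (fun c' => (c' == c) || pl c') ww (by simp)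
              have h2 := count_filter_self c (fun c' => (c' == c) || pl c') w (by simp)
              rw [← h1, hq2y c hca, h2]
          have hww1 : ∀ c, ww.count c = 1 ↔ u.count c = 1 := by
            intro c
            rw [hcntww c]
            by_cases hca : c = a
            · rw [if_pos hca]; exact hz1 c
            · rw [if_neg hca]; exact hw1 c
          have hww2 : ∀ c, 2 ≤ ww.count c ↔ 2 ≤ u.count c := by
            intro c
            rw [hcntww c]
            by_cases hca : c = a
            · rw [if_pos hca]; exact hz2 c
            · rw [if_neg hca]; exact hw2 c
          have hwwzpl : ww.filter pl = z.filter pl := hq3.trans hwzpl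
          have hfilts' : ∀ y : ℕ,
              (ww.filter (fun c => (c == y) || pl c) = u.filter (fun c => (c == y) || pl c) ∧
               z.filter (fun c => (c == y) || pl c) = v.filter (fun c => (c == y) || pl c)) ∨
              ww.filter (fun c => (c == y) || pl c) = z.filter (fun c => (c == y) || pl c) := by
            intro y
            by_cases hya : y = a
            · subst hya; exact Or.inr hq1
            · rcases hfilts y with ⟨h1, h2⟩ | h
              · exact Or.inl ⟨(hq2y y hya).trans h1, h2⟩
              · exact Or.inr ((hq2y y hya).trans h)
          have hdone' : ∀ y : ℕ, 2 ≤ u.count y → y ∉ xs →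
              ww.filter (fun c => (c == y) || pl c) = z.filter (fun c => (c == y) || pl c) ∨
              (¬ SpansB y (ww.filter (fun c => (c == y) || pl c)) ∧
               ¬ SpansB y (z.filter (fun c => (c == y) || pl c))) := by
            intro y hy hyn
            by_cases hya : y = a
            · subst hya; exact Or.inl hq1
            · rcases hdone y hy (by simp [hya, hyn]) with h | ⟨hs1, hs2⟩
              · exact Or.inl ((hq2y y hya).trans h)
              · exact Or.inr ⟨by rw [hq2y y hya]; exact hs1, hs2⟩
          have hchw' : ∀ (M : Type uM) [Monoid M] (φ : ℕ → M), Sat M sigma1 → Sat M sigma2 →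
              (∀ y : ℕ, Sat M (u.filter (fun c => (c == y) || pl c),
                v.filter (fun c => (c == y) || pl c))) →
              evalWord φ u = evalWord φ ww := by
            intro M _ φ h1 h2 hAll
            refine (hchw M φ h1 h2 hAll).trans ?_
            apply hq4 M φ h1 h2
            rw [hfa.1, hfa.2]
            exact hAll a
          exact ih ww z hww1 hww2 hz1 hz2 hwwzpl hfilts' hdone' hchw' hchz
        · by_cases hsz : SpansB a (z.filter (fun c => (c == a) || pl c))
          · -- fix on the z side
            have hqpl : (w.filter (fun c => (c == a) || pl c)).filter pl = z.filter pl := by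
              rw [List.filter_filter]
              rw [show (w.filter fun c => pl c && ((c == a) || pl c)) = w.filter pl from
                List.filter_congr (by intro c _; cases hpc : pl c <;> simp [hpc])]
              exact hwzpl
            have hqmem : ∀ c ∈ w.filter (fun c => (c == a) || pl c), c = a ∨ pl c = true := by
              intro c hc
              have := (List.mem_filter.mp hc).2
              simp only [Bool.or_eq_true, beq_iff_eq] at this
              exact this
            obtain ⟨zz, hq1, hq2y, hq3, hq4⟩ :=
              fixSide a pl z (w.filter (fun c => (c == a) || pl c)) hplxa hlinz hcntz hsz hqpl hqmem
            have hcntzz : ∀ c, zz.count c = (if c = a then w.count c else z.count c) := by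
              intro c
              by_cases hca : c = a
              · subst hca
                rw [if_pos rfl]
                have h1 := count_filter_self c (fun c' => (c' == c) || pl c') zz (by simp)
                have h2 := count_filter_self c (fun c' => (c' == c) || pl c') w (by simp)
                rw [← h1, hq1, h2]
              · rw [if_neg hca]
                have h1 := count_filter_self c (fun c' => (c' == c) || pl c') zz (by simp)
                have h2 := count_filter_self c (fun c' => (c' == c) || pl c') z (by simp)
                rw [← h1, hq2y c hca, h2]
            have hzz1 : ∀ c, zz.count c = 1 ↔ u.count c = 1 := by
              intro c
              rw [hcntzz c]
              by_cases hca : c = a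
              · rw [if_pos hca]; exact hw1 c
              · rw [if_neg hca]; exact hz1 c
            have hzz2 : ∀ c, 2 ≤ zz.count c ↔ 2 ≤ u.count c := by
              intro c
              rw [hcntzz c]
              by_cases hca : c = a
              · rw [if_pos hca]; exact hw2 c
              · rw [if_neg hca]; exact hz2 c
            have hwzpl' : w.filter pl = zz.filter pl := hwzpl.trans hq3.symm
            have hfilts' : ∀ y : ℕ,
                (w.filter (fun c => (c == y) || pl c) = u.filter (fun c => (c == y) || pl c) ∧
                 zz.filter (fun c => (c == y) || pl c) = v.filter (fun c => (c == y) || pl c)) ∨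
                w.filter (fun c => (c == y) || pl c) = zz.filter (fun c => (c == y) || pl c) := by
              intro y
              by_cases hya : y = a
              · subst hya; exact Or.inr hq1.symm
              · rcases hfilts y with ⟨h1, h2⟩ | h
                · exact Or.inl ⟨h1, (hq2y y hya).trans h2⟩
                · exact Or.inr (h.trans (hq2y y hya).symm)
            have hdone' : ∀ y : ℕ, 2 ≤ u.count y → y ∉ xs →
                w.filter (fun c => (c == y) || pl c) = zz.filter (fun c => (c == y) || pl c) ∨
                (¬ SpansB y (w.filter (fun c => (c == y) || pl c)) ∧
                 ¬ SpansB y (zz.filter (fun c => (c == y) || pl c))) := by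
              intro y hy hyn
              by_cases hya : y = a
              · subst hya; exact Or.inl hq1.symm
              · rcases hdone y hy (by simp [hya, hyn]) with h | ⟨hs1, hs2⟩
                · exact Or.inl (h.trans (hq2y y hya).symm)
                · exact Or.inr ⟨hs1, by rw [hq2y y hya]; exact hs2⟩
            have hchz' : ∀ (M : Type uM) [Monoid M] (φ : ℕ → M), Sat M sigma1 → Sat M sigma2 →
                (∀ y : ℕ, Sat M (u.filter (fun c => (c == y) || pl c),
                  v.filter (fun c => (c == y) || pl c))) →
                evalWord φ v = evalWord φ zz := by
              intro M _ φ h1 h2 hAll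
              refine (hchz M φ h1 h2 hAll).trans ?_
              apply hq4 M φ h1 h2
              rw [hfa.1, hfa.2]
              exact Sat.symm' (hAll a)
            exact ih w zz hw1 hw2 hzz1 hzz2 hwzpl' hfilts' hdone' hchw hchz'
          · apply ih w z hw1 hw2 hz1 hz2 hwzpl hfilts _ hchw hchz
            intro y hy hyn
            by_cases hya : y = a
            · subst hya; exact Or.inr ⟨hsw, hsz⟩
            · exact hdone y hy (by simp [hya, hyn])

end J
section K

lemma evalWord_up {M : Type} [Monoid M] (φ : ℕ → M) (w : Wd) :
    evalWord (fun c => ULift.up.{uM} (φ c)) w = ULift.up (evalWord φ w) := by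
  induction w with
  | nil => rfl
  | cons a t ih => rw [evalWord_cons, evalWord_cons, ih]; rfl

lemma sat_ulift_of {M : Type} [Monoid M] {e : Wd × Wd} (h : Sat M e) :
    Sat (ULift.{uM} M) e := by
  intro φ
  have hφ : φ = fun c => ULift.up ((φ c).down) := funext fun c => rfl
  rw [hφ, evalWord_up, evalWord_up, h _]

lemma almostLinear_filter (u w : Wd) (y : ℕ)
    (hcnt : ∀ c, u.count c = 1 → w.count c ≤ 1) :
    AlmostLinearW (w.filter (fun c => (c == y) || (u.count c == 1))) := by
  have key : ∀ c, 2 ≤ (w.filter (fun c => (c == y) || (u.count c == 1))).count c → c = y := by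
    intro c hc
    have hmem : c ∈ w.filter (fun c => (c == y) || (u.count c == 1)) :=
      List.count_pos_iff.mp (by omega)
    have hx := (List.mem_filter.mp hmem).2
    simp only [Bool.or_eq_true, beq_iff_eq] at hx
    rcases hx with h | h
    · exact h
    · exfalso
      have h1 : (w.filter (fun c => (c == y) || (u.count c == 1))).count c ≤ w.count c :=
        (List.filter_sublist (l := w)).count_le c
      have h2 := hcnt c h
      omega
  intro a b ha hb
  rw [key a ha, key b hb]

theorem stmt10 (S : Type*) [Monoid S] (h1 : Sat S sigma1) (h2 : Sat S sigma2) :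
    ∀ e : Wd × Wd, Sat S e → P1 e →
      ∃ τ : Wd × Wd, Sat S τ ∧ P1b τ ∧
        Consequence ({f : Wd × Wd | Sat S f ∧ AlmostLinearId f} ∪
          delta {sigma1, sigma2} ∪ {τ}) e := by
  intro e hSe hP1
  obtain ⟨u, v⟩ := e
  obtain ⟨hP1a, hP1n, hP1c⟩ := hP1
  have hplu : ∀ c : ℕ, (fun c => u.count c == 1) c = true ↔ u.count c = 1 := by
    intro c; simp
  have huv1 : ∀ c, v.count c = 1 ↔ u.count c = 1 := by
    intro c
    have := Set.ext_iff.mp hP1a c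
    simpa [linW] using this.symm
  have huv2 : ∀ c, 2 ≤ v.count c ↔ 2 ≤ u.count c := by
    intro c
    have := Set.ext_iff.mp hP1n c
    simpa [nonW] using this.symm
  have hplfilt : u.filter (fun c => u.count c == 1) = v.filter (fun c => u.count c == 1) := by
    have h := hP1c
    rw [restrict_eq_filter_pl u u, restrict_eq_filter_pl v u] at h
    exact h
  obtain ⟨w', z', hw1, hw2, hz1, hz2, hwzpl, hdone, hchw, hchz⟩ :=
    mainLoop u v (fun c => u.count c == 1) hplu u.dedup u v
      (fun c => Iff.rfl) (fun c => Iff.rfl) huv1 huv2 hplfilt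
      (fun y => Or.inl ⟨rfl, rfl⟩)
      (by
        intro y hy hyn
        exact absurd (List.mem_dedup.mpr (List.count_pos_iff.mp (by omega))) hyn)
      (fun M _ φ _ _ _ => rfl) (fun M _ φ _ _ _ => rfl)
  have hAllS : ∀ y : ℕ, Sat S (u.filter (fun c => (c == y) || (u.count c == 1)),
      v.filter (fun c => (c == y) || (u.count c == 1))) :=
    fun y => Sat.filter hSe _
  have hlw : linW w' = linW u := by
    ext c
    exact hw1 c
  have hlz : linW z' = linW u := by
    ext c
    exact hz1 c
  refine ⟨(w', z'), ?_, ?_, ?_⟩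
  · -- Sat S (w', z')
    intro φ
    have e1 := hchw S φ h1 h2 hAllS
    have e2 := hchz S φ h1 h2 hAllS
    show evalWord φ w' = evalWord φ z'
    rw [← e1, ← e2]
    exact hSe φ
  · -- P1b
    constructor
    · refine ⟨?_, ?_, ?_⟩
      · show linW w' = linW z'
        rw [hlw, hlz]
      · show nonW w' = nonW z'
        ext c
        exact (hw2 c).trans (hz2 c).symm
      · show restrict w' (linW w') = restrict z' (linW w')
        rw [hlw, restrict_eq_filter_pl w' u, restrict_eq_filter_pl z' u]
        exact hwzpl
    · intro y hy hne
      have h2y : 2 ≤ u.count y := (hw2 y).mp hy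
      rw [show linW (w', z').1 = linW u from hlw,
        restrict_eq_filter_px w' u y, restrict_eq_filter_px z' u y] at hne
      rcases hdone y h2y with hEq | ⟨hs1, hs2⟩
      · exact absurd hEq hne
      · constructor
        · exact noLinBetween_of_not_spans w' y _
            (fun c => (hw1 c).trans (hplu c).symm) hy hs1
        · exact noLinBetween_of_not_spans z' y _
            (fun c => (hz1 c).trans (hplu c).symm) ((hz2 y).mpr h2y) hs2
  · -- Consequence
    intro M _ hΓ φ
    have hM1 : Sat M sigma1 := by
      apply hΓ
      exact Or.inl (Or.inr ⟨sigma1, Or.inl rfl, Set.univ, by rw [restrict_univ, restrict_univ]⟩)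
    have hM2 : Sat M sigma2 := by
      apply hΓ
      exact Or.inl (Or.inr ⟨sigma2, Or.inr rfl, Set.univ, by rw [restrict_univ, restrict_univ]⟩)
    have hMall : ∀ y : ℕ, Sat M (u.filter (fun c => (c == y) || (u.count c == 1)),
        v.filter (fun c => (c == y) || (u.count c == 1))) := by
      intro y
      apply hΓ
      refine Or.inl (Or.inl ⟨hAllS y, ?_, ?_⟩)
      · exact almostLinear_filter u u y (fun c hc => by omega)
      · exact almostLinear_filter u v y (fun c hc => by
          have := (huv1 c).mpr hc
          omega)
    have hMτ : Sat M (w', z') := hΓ _ (Or.inr rfl)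
    -- lift to the universe of the chains
    have hM1' := sat_ulift_of.{u_1} hM1
    have hM2' := sat_ulift_of.{u_1} hM2
    have hMall' := fun y => sat_ulift_of.{u_1} (hMall y)
    have hMτ' := sat_ulift_of.{u_1} hMτ
    have e1 := hchw (ULift M) (fun c => ULift.up (φ c)) hM1' hM2' hMall'
    have e2 := hchz (ULift M) (fun c => ULift.up (φ c)) hM1' hM2' hMall'
    have key := e1.trans ((hMτ' (fun c => ULift.up (φ c))).trans e2.symm)
    rw [evalWord_up, evalWord_up] at key
    show evalWord φ u = evalWord φ v
    exact congrArg ULift.down key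

end K
end

section
/- Let x, y, z, t be four distinct variables. (i) If the word x y t y x is an isoterm for a monoid S and S satisfies an identity x y z t x z y ≈ u with u ≠ x y z t x z y, then u = y z x t z y x; likewise, if S satisfies y z x t z y x ≈ u with u ≠ y z x t z y x, then u = x y z t x z y. (ii) The word x y z t x z y is an isoterm for a monoid S if and only if the word y z x t z y x is an isoterm for S. -/
namespace Stmt14Aux

/-- substitution applied to a word -/
def sub (σ : ℕ → Wd) (u : Wd) : Wd := u.flatMap σ

-- keep substitutions
def k3 (c : ℕ) : Wd := if c = 3 then [c] else []
def k03 (c : ℕ) : Wd := if c = 0 ∨ c = 3 then [c] else []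
def k13 (c : ℕ) : Wd := if c = 1 ∨ c = 3 then [c] else []
def k23 (c : ℕ) : Wd := if c = 2 ∨ c = 3 then [c] else []
def k123 (c : ℕ) : Wd := if c = 1 ∨ c = 2 ∨ c = 3 then [c] else []
def k013 (c : ℕ) : Wd := if c = 0 ∨ c = 1 ∨ c = 3 then [c] else []
def k023 (c : ℕ) : Wd := if c = 0 ∨ c = 2 ∨ c = 3 then [c] else []
def kout (c : ℕ) : Wd := if c = 0 ∨ c = 1 ∨ c = 2 ∨ c = 3 then [] else [c]

-- injective codes
def ct (c : ℕ) : Wd := if c = 3 then [0,1,3,1,0] else [c+1]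
def c03 (c : ℕ) : Wd := if c = 0 then [0] else if c = 3 then [1,3,1] else [c+4]
def c13 (c : ℕ) : Wd := if c = 1 then [0] else if c = 3 then [1,3,1] else [c+4]
def c23 (c : ℕ) : Wd := if c = 2 then [0] else if c = 3 then [1,3,1] else [c+4]
def c123 (c : ℕ) : Wd := if c = 1 then [0] else if c = 2 then [1] else if c = 3 then [3] else [c+4]
def th6 (c : ℕ) : Wd := if c = 0 then [1] else if c = 1 then [2] else if c = 3 then [3,0] else [c+4]
def th7 (c : ℕ) : Wd := if c = 0 then [1] else if c = 1 then [2] else if c = 3 then [0,3] else [c+4]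

-- non-injective renaming codes
def sw01 (c : ℕ) : Wd := if c = 0 then [1] else if c = 1 then [0] else [c]
def m2 (c : ℕ) : Wd := if c = 2 then [1] else [c]
def idc (c : ℕ) : Wd := [c]

lemma ct_ne : ∀ c, ct c ≠ [] := by intro c; unfold ct; split_ifs <;> simp
lemma c03_ne : ∀ c, c03 c ≠ [] := by intro c; unfold c03; split_ifs <;> simp
lemma c13_ne : ∀ c, c13 c ≠ [] := by intro c; unfold c13; split_ifs <;> simp
lemma c23_ne : ∀ c, c23 c ≠ [] := by intro c; unfold c23; split_ifs <;> simp
lemma c123_ne : ∀ c, c123 c ≠ [] := by intro c; unfold c123; split_ifs <;> simp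
lemma th6_ne : ∀ c, th6 c ≠ [] := by intro c; unfold th6; split_ifs <;> simp
lemma th7_ne : ∀ c, th7 c ≠ [] := by intro c; unfold th7; split_ifs <;> simp

lemma ct_head : ∀ a b, (ct a).head? = (ct b).head? → a = b := by
  intro a b h; unfold ct at h; split_ifs at h <;> simp_all <;> omega
lemma c03_head : ∀ a b, (c03 a).head? = (c03 b).head? → a = b := by
  intro a b h; unfold c03 at h; split_ifs at h <;> simp_all <;> omega
lemma c13_head : ∀ a b, (c13 a).head? = (c13 b).head? → a = b := by
  intro a b h; unfold c13 at h; split_ifs at h <;> simp_all <;> omega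
lemma c23_head : ∀ a b, (c23 a).head? = (c23 b).head? → a = b := by
  intro a b h; unfold c23 at h; split_ifs at h <;> simp_all <;> omega
lemma c123_head : ∀ a b, (c123 a).head? = (c123 b).head? → a = b := by
  intro a b h; unfold c123 at h; split_ifs at h <;> simp_all <;> omega
lemma th6_head : ∀ a b, (th6 a).head? = (th6 b).head? → a = b := by
  intro a b h; unfold th6 at h; split_ifs at h <;> simp_all <;> omega
lemma th7_head : ∀ a b, (th7 a).head? = (th7 b).head? → a = b := by
  intro a b h; unfold th7 at h; split_ifs at h <;> simp_all <;> omega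

lemma evalWord_append {S : Type*} [Monoid S] (φ : ℕ → S) (a b : Wd) :
    evalWord φ (a ++ b) = evalWord φ a * evalWord φ b := by simp [evalWord]

lemma evalWord_cons {S : Type*} [Monoid S] (φ : ℕ → S) (c : ℕ) (a : Wd) :
    evalWord φ (c :: a) = φ c * evalWord φ a := by simp [evalWord]

lemma eval_sub {S : Type*} [Monoid S] (φ : ℕ → S) (σ : ℕ → Wd) (u : Wd) :
    evalWord φ (sub σ u) = evalWord (fun n => evalWord φ (σ n)) u := by
  induction u with
  | nil => simp [sub, evalWord]
  | cons h t ih =>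
      rw [show sub σ (h :: t) = σ h ++ sub σ t from List.flatMap_cons .., evalWord_append,
        evalWord_cons, ih]

lemma Sat_sub {S : Type*} [Monoid S] {a b : Wd} (σ : ℕ → Wd) (h : Sat S (a, b)) :
    Sat S (sub σ a, sub σ b) := fun φ => by
  simp only [eval_sub]; exact h _

lemma Sat_symm {S : Type*} [Monoid S] {a b : Wd} (h : Sat S (a, b)) : Sat S (b, a) :=
  fun φ => (h φ).symm

lemma code_inj (ρ : ℕ → Wd) (hne : ∀ c, ρ c ≠ [])
    (hhead : ∀ a b, (ρ a).head? = (ρ b).head? → a = b) :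
    ∀ u v : Wd, sub ρ u = sub ρ v → u = v := by
  have key : ∀ c (L : Wd), (ρ c ++ L).head? = (ρ c).head? := by
    intro c L
    obtain ⟨x, xs, hx⟩ := List.exists_cons_of_ne_nil (hne c)
    rw [hx]; rfl
  intro u
  induction u with
  | nil =>
      intro v h
      cases v with
      | nil => rfl
      | cons b t =>
          exfalso
          rw [show sub ρ [] = [] from rfl, show sub ρ (b :: t) = ρ b ++ sub ρ t from
            List.flatMap_cons ..] at h
          exact hne b (List.append_eq_nil_iff.mp h.symm).1
  | cons a ta ih =>
      intro v h
      cases v with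
      | nil =>
          exfalso
          rw [show sub ρ [] = [] from rfl, show sub ρ (a :: ta) = ρ a ++ sub ρ ta from
            List.flatMap_cons ..] at h
          exact hne a (List.append_eq_nil_iff.mp h).1
      | cons b tb =>
          rw [show sub ρ (a :: ta) = ρ a ++ sub ρ ta from List.flatMap_cons ..,
            show sub ρ (b :: tb) = ρ b ++ sub ρ tb from List.flatMap_cons ..] at h
          have hab : a = b := by
            apply hhead
            rw [← key a (sub ρ ta), ← key b (sub ρ tb), h]
          subst hab
          have := List.append_cancel_left h
          rw [ih tb this]

lemma recover {S : Type*} [Monoid S] (hiso : Isoterm S [0,1,3,1,0]) (ρ : ℕ → Wd)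
    (hne : ∀ c, ρ c ≠ []) (hhead : ∀ a b, (ρ a).head? = (ρ b).head? → a = b)
    {V Z : Wd} (h : Sat S (V, Z)) (hv : sub ρ V = [0,1,3,1,0]) : Z = V := by
  have h2 := Sat_sub ρ h
  rw [hv] at h2
  exact code_inj ρ hne hhead Z V ((hiso _ h2).trans hv.symm)

lemma elimVia {S : Type*} [Monoid S] (hiso : Isoterm S [0,1,3,1,0]) (ρ : ℕ → Wd)
    {V Z : Wd} (h : Sat S (V, Z)) (hz : sub ρ Z = [0,1,3,1,0])
    (hv : sub ρ V ≠ [0,1,3,1,0]) : False := by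
  have h2 := Sat_sub ρ (Sat_symm h)
  rw [hz] at h2
  exact hv (hiso _ h2)

lemma content_out {S : Type*} [Monoid S] (hiso : Isoterm S [0,1,3,1,0]) {V Z : Wd}
    (h : Sat S (V, Z)) (hV : sub kout V = []) : sub kout Z = [] := by
  have h1 := Sat_sub kout h
  rw [hV] at h1
  have h2 : Sat S (([0,1,3,1,0] : Wd), [0,1,3,1,0] ++ sub kout Z) := by
    intro φ
    have e : evalWord φ (sub kout Z) = 1 := ((h1 φ).symm).trans (by simp [evalWord])
    rw [evalWord_append, e, mul_one]
  have h3 := hiso _ h2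
  have h4 : ([0,1,3,1,0] : Wd) ++ sub kout Z = [0,1,3,1,0] ++ [] := by
    rw [h3]; rfl
  exact List.append_cancel_left h4

lemma mem_sub_keep {k : ℕ → Wd} (hk : ∀ c, k c = [c] ∨ k c = []) {L : Wd} {c : ℕ}
    (h : c ∈ sub k L) : c ∈ L := by
  obtain ⟨a, haL, hc⟩ := List.mem_flatMap.mp h
  rcases hk a with h' | h' <;> rw [h'] at hc <;> simp at hc
  rwa [hc]

lemma split3 : ∀ (A C B D : Wd), 3 ∉ A → 3 ∉ C → A ++ 3 :: B = C ++ 3 :: D → A = C ∧ B = D := by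
  intro A
  induction A with
  | nil =>
      intro C B D _ hC h
      cases C with
      | nil => simpa using h
      | cons c C' =>
          simp only [List.nil_append, List.cons_append, List.cons.injEq] at h
          exact absurd (h.1 ▸ List.mem_cons_self (a := c) (l := C')) hC
  | cons a A' ih =>
      intro C B D hA hC h
      cases C with
      | nil =>
          simp only [List.cons_append, List.nil_append, List.cons.injEq] at h
          exact absurd (h.1 ▸ List.mem_cons_self (a := a) (l := A')) hA
      | cons c C' =>
          simp only [List.cons_append, List.cons.injEq] at h
          obtain ⟨h1, h2⟩ := h
          have := ih C' B D (fun hm => hA (List.mem_cons_of_mem _ hm))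
            (fun hm => hC (List.mem_cons_of_mem _ hm)) h2
          exact ⟨by rw [h1, this.1], this.2⟩

lemma lensum : ∀ L : Wd, (∀ c ∈ L, c = 0 ∨ c = 1 ∨ c = 2) →
    L.length = (sub k03 L).length + (sub k13 L).length + (sub k23 L).length := by
  intro L
  induction L with
  | nil => intro _; simp [sub]
  | cons a t ih =>
      intro hm
      have ht := ih (fun c hc => hm c (List.mem_cons_of_mem _ hc))
      have ha := hm a (List.mem_cons_self (a := a) (l := t))
      rw [show sub k03 (a :: t) = k03 a ++ sub k03 t from List.flatMap_cons ..,
        show sub k13 (a :: t) = k13 a ++ sub k13 t from List.flatMap_cons ..,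
        show sub k23 (a :: t) = k23 a ++ sub k23 t from List.flatMap_cons ..]
      rcases ha with rfl | rfl | rfl <;> simp [k03, k13, k23] <;> omega

lemma pcase (p : Wd) (hm : ∀ c ∈ p, c = 0 ∨ c = 1 ∨ c = 2)
    (h0 : sub k03 p = [0]) (h1 : sub k13 p = [1]) (h2 : sub k23 p = [2])
    (h12 : sub k123 p = [1,2]) :
    p = [0,1,2] ∨ p = [1,0,2] ∨ p = [1,2,0] := by
  have hlen : p.length = 3 := by rw [lensum p hm, h0, h1, h2]; rfl
  match p, hlen with
  | [a, b, c], _ =>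
    have ha := hm a (by simp)
    have hb := hm b (by simp)
    have hc := hm c (by simp)
    clear hm hlen
    rcases ha with rfl | rfl | rfl <;> rcases hb with rfl | rfl | rfl <;>
      rcases hc with rfl | rfl | rfl <;> revert h0 h1 h2 h12 <;> decide

lemma scase (p : Wd) (hm : ∀ c ∈ p, c = 0 ∨ c = 1 ∨ c = 2)
    (h0 : sub k03 p = [0]) (h1 : sub k13 p = [1]) (h2 : sub k23 p = [2])
    (h12 : sub k123 p = [2,1]) :
    p = [0,2,1] ∨ p = [2,0,1] ∨ p = [2,1,0] := by
  have hlen : p.length = 3 := by rw [lensum p hm, h0, h1, h2]; rfl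
  match p, hlen with
  | [a, b, c], _ =>
    have ha := hm a (by simp)
    have hb := hm b (by simp)
    have hc := hm c (by simp)
    clear hm hlen
    rcases ha with rfl | rfl | rfl <;> rcases hb with rfl | rfl | rfl <;>
      rcases hc with rfl | rfl | rfl <;> revert h0 h1 h2 h12 <;> decide

lemma master {S : Type*} [Monoid S] (hiso : Isoterm S [0,1,3,1,0]) (v₀ u : Wd)
    (hout : sub kout v₀ = [])
    (hv3 : sub k3 v₀ = [3])
    (hv03 : sub k03 v₀ = [0,3,0]) (hv13 : sub k13 v₀ = [1,3,1]) (hv23 : sub k23 v₀ = [2,3,2])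
    (hv123 : sub k123 v₀ = [1,2,3,2,1])
    (h013 : sub k013 v₀ = [0,1,3,0,1] ∨ sub k013 v₀ = [1,0,3,1,0])
    (h023 : sub k023 v₀ = [0,2,3,0,2] ∨ sub k023 v₀ = [2,0,3,2,0])
    (hsat : Sat S (v₀, u)) : u = [0,1,2,3,0,2,1] ∨ u = [1,2,0,3,2,1,0] := by
  have hUout : sub kout u = [] := content_out hiso hsat hout
  have hmem : ∀ c ∈ u, c = 0 ∨ c = 1 ∨ c = 2 ∨ c = 3 := by
    intro c hc
    by_contra hcon
    push_neg at hcon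
    have h1 : kout c = [] := List.flatMap_eq_nil_iff.mp hUout c hc
    obtain ⟨a1, a2, a3, a4⟩ := hcon
    simp [kout, a1, a2, a3, a4] at h1
  have hU3 : sub k3 u = [3] := by
    have hs := Sat_sub k3 hsat; rw [hv3] at hs
    exact recover hiso ct ct_ne ct_head hs (by decide)
  have hU03 : sub k03 u = [0,3,0] := by
    have hs := Sat_sub k03 hsat; rw [hv03] at hs
    exact recover hiso c03 c03_ne c03_head hs (by decide)
  have hU13 : sub k13 u = [1,3,1] := by
    have hs := Sat_sub k13 hsat; rw [hv13] at hs
    exact recover hiso c13 c13_ne c13_head hs (by decide)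
  have hU23 : sub k23 u = [2,3,2] := by
    have hs := Sat_sub k23 hsat; rw [hv23] at hs
    exact recover hiso c23 c23_ne c23_head hs (by decide)
  have hU123 : sub k123 u = [1,2,3,2,1] := by
    have hs := Sat_sub k123 hsat; rw [hv123] at hs
    exact recover hiso c123 c123_ne c123_head hs (by decide)
  have h3mem : (3 : ℕ) ∈ u := by
    have hx : (3 : ℕ) ∈ sub k3 u := by rw [hU3]; simp
    obtain ⟨a, haL, hc⟩ := List.mem_flatMap.mp hx
    have ha3 : a = 3 := by by_contra hne; simp [k3, hne] at hc
    rwa [ha3] at haL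
  obtain ⟨p, s, rfl⟩ := List.append_of_mem h3mem
  have happ : ∀ k : ℕ → Wd, k 3 = [3] → sub k (p ++ 3 :: s) = sub k p ++ 3 :: sub k s := by
    intro k hk
    simp [sub, List.flatMap_append, List.flatMap_cons, hk]
  rw [happ k3 (by decide)] at hU3
  rw [happ k03 (by decide)] at hU03
  rw [happ k13 (by decide)] at hU13
  rw [happ k23 (by decide)] at hU23
  rw [happ k123 (by decide)] at hU123
  have no3 : ∀ L : Wd, sub k3 L = [] → 3 ∉ L := by
    intro L hL hm
    have := List.flatMap_eq_nil_iff.mp hL 3 hm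
    simp [k3] at this
  have hlp : sub k3 p = [] ∧ sub k3 s = [] := by
    have hl := congrArg List.length hU3
    simp only [List.length_append, List.length_cons, List.length_nil] at hl
    constructor <;> apply List.eq_nil_of_length_eq_zero <;> omega
  have hp3 : 3 ∉ p := no3 p hlp.1
  have hs3 : 3 ∉ s := no3 s hlp.2
  have keep03 : ∀ c, k03 c = [c] ∨ k03 c = [] := by intro c; unfold k03; split_ifs <;> simp
  have keep13 : ∀ c, k13 c = [c] ∨ k13 c = [] := by intro c; unfold k13; split_ifs <;> simp
  have keep23 : ∀ c, k23 c = [c] ∨ k23 c = [] := by intro c; unfold k23; split_ifs <;> simp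
  have keep123 : ∀ c, k123 c = [c] ∨ k123 c = [] := by intro c; unfold k123; split_ifs <;> simp
  have no3sub : ∀ (k : ℕ → Wd), (∀ c, k c = [c] ∨ k c = []) → ∀ L : Wd, 3 ∉ L → 3 ∉ sub k L :=
    fun k hk L hL hm => hL (mem_sub_keep hk hm)
  obtain ⟨hp03, hs03⟩ := split3 _ [0] _ [0] (no3sub k03 keep03 p hp3) (by decide) hU03
  obtain ⟨hp13, hs13⟩ := split3 _ [1] _ [1] (no3sub k13 keep13 p hp3) (by decide) hU13
  obtain ⟨hp23, hs23⟩ := split3 _ [2] _ [2] (no3sub k23 keep23 p hp3) (by decide) hU23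
  obtain ⟨hp123, hs123⟩ := split3 _ [1,2] _ [2,1] (no3sub k123 keep123 p hp3) (by decide) hU123
  have hmp : ∀ c ∈ p, c = 0 ∨ c = 1 ∨ c = 2 := by
    intro c hc
    rcases hmem c (List.mem_append_left _ hc) with h | h | h | h
    · exact Or.inl h
    · exact Or.inr (Or.inl h)
    · exact Or.inr (Or.inr h)
    · exact absurd (h ▸ hc) hp3
  have hms : ∀ c ∈ s, c = 0 ∨ c = 1 ∨ c = 2 := by
    intro c hc
    rcases hmem c (List.mem_append_right _ (List.mem_cons_of_mem _ hc)) with h | h | h | h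
    · exact Or.inl h
    · exact Or.inr (Or.inl h)
    · exact Or.inr (Or.inr h)
    · exact absurd (h ▸ hc) hs3
  rcases pcase p hmp hp03 hp13 hp23 hp123 with rfl | rfl | rfl <;>
    rcases scase s hms hs03 hs13 hs23 hs123 with rfl | rfl | rfl <;>
    first
      | (left; rfl)
      | (right; rfl)
      | exact (elimVia hiso idc (Sat_sub k013 hsat) (by decide)
          (by rcases h013 with h | h <;> rw [h] <;> decide)).elim
      | exact (elimVia hiso sw01 (Sat_sub k013 hsat) (by decide)
          (by rcases h013 with h | h <;> rw [h] <;> decide)).elim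
      | exact (elimVia hiso m2 (Sat_sub k023 hsat) (by decide)
          (by rcases h023 with h | h <;> rw [h] <;> decide)).elim

lemma iso_w_imp {S : Type*} [Monoid S] (h : Isoterm S [0,1,2,3,0,2,1]) :
    Isoterm S [0,1,3,1,0] := by
  intro v hv
  have h6 := Sat_sub th6 hv
  rw [show sub th6 [0,1,3,1,0] = [1,2,3,0,2,1] from by decide] at h6
  have h7 : Sat S (([0,1,2,3,0,2,1] : Wd), 0 :: sub th6 v) := by
    intro φ
    show evalWord φ [0,1,2,3,0,2,1] = evalWord φ (0 :: sub th6 v)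
    have e : evalWord φ [1,2,3,0,2,1] = evalWord φ (sub th6 v) := h6 φ
    have e2 : evalWord φ [0,1,2,3,0,2,1] = φ 0 * evalWord φ [1,2,3,0,2,1] :=
      evalWord_cons φ 0 _
    rw [e2, e, ← evalWord_cons]
  have h8 := h _ h7
  injection h8 with _ h9
  exact code_inj th6 th6_ne th6_head v [0,1,3,1,0] (h9.trans (by decide))

lemma iso_w'_imp {S : Type*} [Monoid S] (h : Isoterm S [1,2,0,3,2,1,0]) :
    Isoterm S [0,1,3,1,0] := by
  intro v hv
  have h6 := Sat_sub th7 hv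
  rw [show sub th7 [0,1,3,1,0] = [1,2,0,3,2,1] from by decide] at h6
  have h7 : Sat S (([1,2,0,3,2,1,0] : Wd), sub th7 v ++ [0]) := by
    intro φ
    show evalWord φ [1,2,0,3,2,1,0] = evalWord φ (sub th7 v ++ [0])
    have e : evalWord φ [1,2,0,3,2,1] = evalWord φ (sub th7 v) := h6 φ
    have e2 : evalWord φ [1,2,0,3,2,1,0] = evalWord φ [1,2,0,3,2,1] * evalWord φ [0] := by
      rw [← evalWord_append]; rfl
    rw [e2, e, ← evalWord_append]
  have h8 := h _ h7
  have h9 : sub th7 v = [1,2,0,3,2,1] := List.append_cancel_right h8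
  exact code_inj th7 th7_ne th7_head v [0,1,3,1,0] (h9.trans (by decide))

end Stmt14Aux


theorem stmt14 (S : Type*) [Monoid S] :
    (Isoterm S [0,1,3,1,0] →
      (∀ u : Wd, Sat S ([0,1,2,3,0,2,1], u) → u ≠ [0,1,2,3,0,2,1] →
        u = [1,2,0,3,2,1,0]) ∧
      (∀ u : Wd, Sat S ([1,2,0,3,2,1,0], u) → u ≠ [1,2,0,3,2,1,0] →
        u = [0,1,2,3,0,2,1])) ∧
    (Isoterm S [0,1,2,3,0,2,1] ↔ Isoterm S [1,2,0,3,2,1,0]) := by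
  constructor
  · intro hiso
    constructor
    · intro u hs hne
      rcases Stmt14Aux.master hiso [0,1,2,3,0,2,1] u (by decide) (by decide) (by decide)
        (by decide) (by decide) (by decide) (Or.inl (by decide)) (Or.inl (by decide)) hs
        with h | h
      · exact absurd h hne
      · exact h
    · intro u hs hne
      rcases Stmt14Aux.master hiso [1,2,0,3,2,1,0] u (by decide) (by decide) (by decide)
        (by decide) (by decide) (by decide) (Or.inr (by decide)) (Or.inr (by decide)) hs
        with h | h
      · exact h
      · exact absurd h hne
  · constructor
    · intro hW v hv
      have hiso := Stmt14Aux.iso_w_imp hW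
      rcases Stmt14Aux.master hiso [1,2,0,3,2,1,0] v (by decide) (by decide) (by decide)
        (by decide) (by decide) (by decide) (Or.inr (by decide)) (Or.inr (by decide)) hv
        with h | h
      · exact absurd (hW _ (Stmt14Aux.Sat_symm (h ▸ hv))) (by decide)
      · exact h
    · intro hW' v hv
      have hiso := Stmt14Aux.iso_w'_imp hW'
      rcases Stmt14Aux.master hiso [0,1,2,3,0,2,1] v (by decide) (by decide) (by decide)
        (by decide) (by decide) (by decide) (Or.inl (by decide)) (Or.inl (by decide)) hv
        with h | h
      · exact h
      · exact absurd (hW' _ (Stmt14Aux.Sat_symm (h ▸ hv))) (by decide)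
end
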